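/- arXiv:1904.12525 — 10 statements merged into one kernel-verified Lean document; each statement's English description precedes it below -/
import Mathlib

section
/- Every locally compact topological group is proximally fine with respect to its right uniformity. -/
open Pointwise

universe u v

/-- Right uniform continuity of `f : G → Y`: a basis of the right uniformity of a topological
group `G` is given by the sets `{(g, h) : g * h⁻¹ ∈ U}`, `U` a neighborhood of the identity. -/
def RightUC {G : Type*} [Group G] (t : TopologicalSpace G) {Y : Type*} [UniformSpace Y]
    (f : G → Y) : Prop :=
  ∀ V ∈ uniformity Y, ∃ U ∈ @nhds G t 1, ∀ g h : G, g * h⁻¹ ∈ U → (f g, f h) ∈ V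

/-- Left uniform continuity of `f : G → Y`: a basis of the left uniformity of a topological
group `G` is given by the sets `{(g, h) : g⁻¹ * h ∈ U}`, `U` a neighborhood of the identity. -/
def LeftUC {G : Type*} [Group G] (t : TopologicalSpace G) {Y : Type*} [UniformSpace Y]
    (f : G → Y) : Prop :=
  ∀ V ∈ uniformity Y, ∃ U ∈ @nhds G t 1, ∀ g h : G, g⁻¹ * h ∈ U → (f g, f h) ∈ V

/-- `f : G → Y` is proximally continuous for the right uniformity of `G`: for every bounded
uniformly continuous `φ : Y → ℝ`, the composition `φ ∘ f` is right uniformly continuous. -/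
def RightProxCont {G : Type*} [Group G] (t : TopologicalSpace G) {Y : Type*} [UniformSpace Y]
    (f : G → Y) : Prop :=
  ∀ φ : Y → ℝ, UniformContinuous φ → (∃ C, ∀ y, |φ y| ≤ C) → RightUC t (φ ∘ f)

/-- A topological group is proximally fine with respect to its right uniformity if every
proximally continuous map into any uniform space is uniformly continuous. -/
def ProxFineGroup {G : Type*} [Group G] (t : TopologicalSpace G) : Prop :=
  ∀ (Y : Type v) [UniformSpace Y] (f : G → Y), RightProxCont t f → RightUC t f

/-- A subset `A` of a topological space `X` is relatively o-radial in `X` if for every family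
`(O i)` of open sets and every `a ∈ A` with `a ∈ closure (⋃ i, O i ∩ A)` and `a ∉ closure (O i)`
for all `i`, there is `J ⊆ I` of regular cardinality such that `a ∈ closure (⋃ j ∈ L, O j)`
for every `L ⊆ J` of the same cardinality as `J`. -/
def RelORadial {X : Type u} [TopologicalSpace X] (A : Set X) : Prop :=
  ∀ {ι : Type u} (O : ι → Set X) (a : X), a ∈ A → (∀ i, IsOpen (O i)) →
    a ∈ closure (⋃ i, O i ∩ A) → (∀ i, a ∉ closure (O i)) →
    ∃ J : Set ι, (Cardinal.mk J).IsRegular ∧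
      ∀ L : Set ι, L ⊆ J → Cardinal.mk L = Cardinal.mk J → a ∈ closure (⋃ j ∈ L, O j)


section AuxProxFine

open Filter Set Topology Uniformity SetRel

theorem chain_pseudometric {Y : Type*} (W : ℕ → Set (Y × Y))
    (hsymm : ∀ n, SetRel.IsSymm (W n)) (hrefl : ∀ n x, (x, x) ∈ W n)
    (hcomp : ∀ n, W (n+1) ○ W (n+1) ⊆ W n) :
    ∃ d : Y → Y → ℝ, (∀ y, d y y = 0) ∧ (∀ y z, d y z = d z y) ∧
      (∀ x y z, d x z ≤ d x y + d y z) ∧ (∀ y z, 0 ≤ d y z) ∧ (∀ y z, d y z ≤ 1) ∧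
      (∀ η : ℝ, 0 < η → ∃ n, W n ⊆ {p : Y × Y | d p.1 p.2 < η}) ∧
      ∃ ε : ℝ, 0 < ε ∧ ε ≤ 1/2 ∧ ∀ y z, d y z < ε → (y, z) ∈ W 0 := by
  classical
  have hWsub : ∀ n, W (n+1) ⊆ W n := fun n p hp => hcomp n ⟨p.1, hrefl (n+1) p.1, hp⟩
  have hWanti : ∀ m n, m ≤ n → W n ⊆ W m := by
    intro m n h
    induction h with
    | refl => exact subset_rfl
    | step _ ih => exact fun p hp => ih (hWsub _ hp)
  set F : Filter (Y × Y) := ⨅ n, 𝓟 (W n) with hF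
  have hdir : Directed (· ≥ ·) W := fun m n =>
    ⟨max m n, hWanti m _ (le_max_left _ _), hWanti n _ (le_max_right _ _)⟩
  have hWF : ∀ n, W n ∈ F := fun n => mem_iInf_of_mem n (mem_principal_self _)
  have hFbasis : F.HasBasis (fun _ => True) W := hasBasis_iInf_principal hdir
  have hmemF : ∀ r : Set (Y × Y), r ∈ F → ∃ n, W n ⊆ r := by
    intro r hr
    rcases hFbasis.mem_iff.1 hr with ⟨n, -, hn⟩
    exact ⟨n, hn⟩
  letI u' : UniformSpace Y := UniformSpace.ofCore <| UniformSpace.Core.mk' F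
    (fun r hr x => (hmemF r hr).choose_spec (hrefl _ x))
    (by
      intro r hr
      obtain ⟨n, hn⟩ := hmemF r hr
      exact mem_of_superset (hWF n) fun p hp => hn ((hsymm n).symm _ _ hp))
    (by
      intro r hr
      obtain ⟨n, hn⟩ := hmemF r hr
      exact ⟨W (n+1), hWF (n+1), (hcomp n).trans hn⟩)
  have hu' : 𝓤 Y = F := rfl
  haveI hcg : (𝓤 Y).IsCountablyGenerated := by rw [hu']; infer_instance
  obtain ⟨m, hm⟩ := UniformSpace.metrizable_uniformity Y
  letI := m
  have hmu : 𝓤[m.toUniformSpace] = F := by rw [hm, hu']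
  have hddF : ∀ η : ℝ, 0 < η → ∃ n, W n ⊆ {p : Y × Y | dist p.1 p.2 < η} := by
    intro η hη
    apply hmemF
    rw [← hmu]
    exact Metric.dist_mem_uniformity hη
  have hddV : ∃ ε : ℝ, 0 < ε ∧ ∀ y z : Y, dist y z < ε → (y, z) ∈ W 0 := by
    have hW0F : W 0 ∈ 𝓤[m.toUniformSpace] := by rw [hmu]; exact hWF 0
    rcases Metric.mem_uniformity_dist.1 hW0F with ⟨ε, hε, h⟩
    exact ⟨ε, hε, fun y z hyz => h hyz⟩
  obtain ⟨ε0, hε0, hε0V⟩ := hddV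
  refine ⟨fun y z => min (dist y z) 1, ?_, ?_, ?_, ?_, ?_, ?_, ?_⟩
  · intro y; simp
  · intro y z; simp [dist_comm y z]
  · intro x y z
    show min (dist x z) 1 ≤ min (dist x y) 1 + min (dist y z) 1
    rcases le_or_gt 1 (dist x y) with h | h
    · have h2 : min (dist x y) 1 = 1 := min_eq_right h
      have h3 : (0:ℝ) ≤ min (dist y z) 1 := le_min dist_nonneg zero_le_one
      rw [h2]
      have := min_le_right (dist x z) (1:ℝ)
      linarith
    rcases le_or_gt 1 (dist y z) with h' | h'
    · have h2 : min (dist y z) 1 = 1 := min_eq_right h'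
      have h3 : (0:ℝ) ≤ min (dist x y) 1 := le_min dist_nonneg zero_le_one
      rw [h2]
      have := min_le_right (dist x z) (1:ℝ)
      linarith
    · calc min (dist x z) 1 ≤ dist x z := min_le_left _ _
        _ ≤ dist x y + dist y z := dist_triangle x y z
        _ = min (dist x y) 1 + min (dist y z) 1 := by
            rw [min_eq_left h.le, min_eq_left h'.le]
  · intro y z; exact le_min dist_nonneg zero_le_one
  · intro y z; exact min_le_right _ _
  · intro η hη
    obtain ⟨n, hn⟩ := hddF η hη
    refine ⟨n, fun p hp => ?_⟩
    show min (dist p.1 p.2) 1 < η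
    exact lt_of_le_of_lt (min_le_left _ _) (hn hp)
  · refine ⟨min ε0 (1/2), lt_min hε0 (by norm_num), min_le_right _ _, ?_⟩
    intro y z h
    apply hε0V
    have h1 : min (dist y z) 1 < ε0 := lt_of_lt_of_le h (min_le_left _ _)
    have h2 : min (dist y z) 1 < 1 := lt_of_lt_of_le h ((min_le_right _ _).trans (by norm_num))
    rcases min_cases (dist y z) (1:ℝ) with ⟨he, _⟩ | ⟨he, _⟩
    · rwa [he] at h1
    · rw [he] at h2; linarith

theorem exists_bdd_pseudometric {Y : Type*} [UniformSpace Y] {V : Set (Y × Y)}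
    (hV : V ∈ uniformity Y) :
    ∃ d : Y → Y → ℝ, (∀ y, d y y = 0) ∧ (∀ y z, d y z = d z y) ∧
      (∀ x y z, d x z ≤ d x y + d y z) ∧ (∀ y z, 0 ≤ d y z) ∧ (∀ y z, d y z ≤ 1) ∧
      (∀ η : ℝ, 0 < η → {p : Y × Y | d p.1 p.2 < η} ∈ uniformity Y) ∧
      ∃ ε : ℝ, 0 < ε ∧ ε ≤ 1/2 ∧ ∀ y z, d y z < ε → (y, z) ∈ V := by
  classical
  have step : ∀ s : Set (Y × Y), s ∈ uniformity Y →
      ∃ t : Set (Y × Y), (t ∈ uniformity Y ∧ SetRel.IsSymm t) ∧ t ○ t ⊆ s := by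
    intro s hs
    obtain ⟨t, ht, hsymm, hcomp⟩ := comp_symm_mem_uniformity_sets hs
    exact ⟨t, ⟨ht, hsymm⟩, hcomp⟩
  let W : ℕ → {s : Set (Y × Y) // s ∈ uniformity Y ∧ SetRel.IsSymm s} := fun n =>
    Nat.rec ⟨(step V hV).choose, (step V hV).choose_spec.1⟩
      (fun _ p => ⟨(step p.1 p.2.1).choose, (step p.1 p.2.1).choose_spec.1⟩) n
  have hW0 : (W 0).1 ○ (W 0).1 ⊆ V := (step V hV).choose_spec.2
  have hWs : ∀ n, (W (n+1)).1 ○ (W (n+1)).1 ⊆ (W n).1 := fun n =>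
    (step (W n).1 (W n).2.1).choose_spec.2
  obtain ⟨d, p1, p2, p3, p4, p5, p6, ε, hε, hε2, p7⟩ :=
    chain_pseudometric (fun n => (W n).1) (fun n => (W n).2.2)
      (fun n x => refl_mem_uniformity (W n).2.1) hWs
  refine ⟨d, p1, p2, p3, p4, p5, ?_, ε, hε, hε2, ?_⟩
  · intro η hη
    obtain ⟨n, hn⟩ := p6 η hη
    exact mem_of_superset (W n).2.1 hn
  · intro y z h
    exact hW0 ⟨y, refl_mem_uniformity (W 0).2.1, p7 y z h⟩


theorem sep_or_cluster {Y : Type*} (d : Y → Y → ℝ) (hsymm : ∀ y z, d y z = d z y)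
    (y : ℕ → Y) (M : Set ℕ) (hM : M.Infinite) (r : ℝ) :
    (∃ p, {m | m ∈ M ∧ d (y m) p < r}.Infinite) ∨
    (∃ M' : Set ℕ, M' ⊆ M ∧ M'.Infinite ∧
      ∀ i ∈ M', ∀ j ∈ M', i ≠ j → r ≤ d (y i) (y j)) := by
  classical
  by_cases hcl : ∃ p, {m | m ∈ M ∧ d (y m) p < r}.Infinite
  · exact Or.inl hcl
  push_neg at hcl
  have hpick : ∀ F : Finset ℕ, ∃ m, m ∈ M ∧ m ∉ F ∧ ∀ i ∈ F, r ≤ d (y m) (y i) := by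
    intro F
    have hbad : ((↑F : Set ℕ) ∪ ⋃ i ∈ F, {m | m ∈ M ∧ d (y m) (y i) < r}).Finite :=
      F.finite_toSet.union (Set.Finite.biUnion F.finite_toSet fun i _ => hcl (y i))
    obtain ⟨m, hm⟩ := (hM.diff hbad).nonempty
    refine ⟨m, hm.1, fun hmF => hm.2 (Or.inl hmF), fun i hi => ?_⟩
    by_contra hlt
    push_neg at hlt
    exact hm.2 (Or.inr (Set.mem_biUnion hi ⟨hm.1, hlt⟩))
  let Fs : ℕ → Finset ℕ := fun n =>
    Nat.rec (∅ : Finset ℕ) (fun _ F => insert (hpick F).choose F) n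
  let c : ℕ → ℕ := fun n => (hpick (Fs n)).choose
  have hFs : ∀ n, Fs (n+1) = insert (c n) (Fs n) := fun n => rfl
  have hFmono : ∀ n, Fs n ⊆ Fs (n+1) := fun n => by
    rw [hFs]; exact Finset.subset_insert _ _
  have hFle : ∀ n m, n ≤ m → Fs n ⊆ Fs m := by
    intro n m h
    induction h with
    | refl => exact subset_rfl
    | step _ ih => exact ih.trans (hFmono _)
  have hcF : ∀ n m, n < m → c n ∈ Fs m := by
    intro n m h
    apply hFle (n+1) m h
    rw [hFs]; exact Finset.mem_insert_self _ _
  have hcM : ∀ n, c n ∈ M := fun n => (hpick (Fs n)).choose_spec.1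
  have hcnF : ∀ n, c n ∉ Fs n := fun n => (hpick (Fs n)).choose_spec.2.1
  have hsep : ∀ n m, n < m → r ≤ d (y (c m)) (y (c n)) := fun n m h =>
    (hpick (Fs m)).choose_spec.2.2 (c n) (hcF n m h)
  have hinj : Function.Injective c := by
    intro i j hij
    by_contra hne
    rcases Ne.lt_or_gt hne with h | h
    · exact hcnF j (hij ▸ hcF i j h)
    · exact hcnF i (hij.symm ▸ hcF j i h)
  refine Or.inr ⟨Set.range c, ?_, Set.infinite_range_of_injective hinj, ?_⟩
  · rintro _ ⟨n, rfl⟩; exact hcM n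
  · rintro _ ⟨i, rfl⟩ _ ⟨j, rfl⟩ hne
    have hij : i ≠ j := fun h => hne (h ▸ rfl)
    rcases hij.lt_or_gt with h | h
    · rw [hsymm]; exact hsep i j h
    · exact hsep j i h


theorem csInf_le_csInf_add {ι : Type*} {S : Set ι} (hS : S.Nonempty) (F H : ι → ℝ)
    (hF0 : ∀ i ∈ S, 0 ≤ F i) {δ : ℝ}
    (h : ∀ i ∈ S, F i ≤ H i + δ) : sInf (F '' S) ≤ sInf (H '' S) + δ := by
  have hbdd : BddBelow (F '' S) := ⟨0, by rintro _ ⟨i, hi, rfl⟩; exact hF0 i hi⟩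
  have key : sInf (F '' S) - δ ≤ sInf (H '' S) := by
    apply le_csInf (hS.image H)
    rintro _ ⟨i, hi, rfl⟩
    have h1 : sInf (F '' S) ≤ F i := csInf_le hbdd (mem_image_of_mem F hi)
    have h2 := h i hi
    linarith
  linarith

theorem abs_csInf_sub_csInf_le {ι : Type*} {S : Set ι} (hS : S.Nonempty) (F H : ι → ℝ)
    (hF0 : ∀ i ∈ S, 0 ≤ F i) (hH0 : ∀ i ∈ S, 0 ≤ H i) {δ : ℝ}
    (h : ∀ i ∈ S, |F i - H i| ≤ δ) : |sInf (F '' S) - sInf (H '' S)| ≤ δ := by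
  rw [abs_sub_le_iff]
  constructor
  · have := csInf_le_csInf_add hS F H hF0 (fun i hi => by
      have := abs_sub_le_iff.1 (h i hi); linarith [this.1])
    linarith
  · have := csInf_le_csInf_add hS H F hH0 (fun i hi => by
      have := abs_sub_le_iff.1 (h i hi); linarith [this.2])
    linarith

theorem cont_of_mod {G : Type*} [Group G] [TopologicalSpace G] [IsTopologicalGroup G] (ψ : G → ℝ)
    (h : ∀ η : ℝ, 0 < η → ∃ W ∈ 𝓝 (1 : G), ∀ g h' : G, g * h'⁻¹ ∈ W → |ψ g - ψ h'| < η) :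
    Continuous ψ := by
  rw [continuous_iff_continuousAt]
  intro x
  rw [ContinuousAt, Metric.tendsto_nhds]
  intro η hη
  obtain ⟨W, hW, hWosc⟩ := h η hη
  have hmem : {g : G | g * x⁻¹ ∈ W} ∈ 𝓝 x := by
    rw [← nhds_translation_mul_inv x]
    exact preimage_mem_comap hW
  filter_upwards [hmem] with g hg
  rw [Real.dist_eq]
  exact hWosc g x hg

theorem trans_osc {G : Type*} [Group G] [TopologicalSpace G] [IsTopologicalGroup G] (ψ : G → ℝ)
    (hc : Continuous ψ) (W : Set G) {δ : ℝ}
    (hW : ∀ g h' : G, g * h'⁻¹ ∈ W → |ψ g - ψ h'| < δ) {s : G} (hs : s ∈ closure W) (x : G) :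
    |ψ (s * x) - ψ x| ≤ δ := by
  have hCc : IsClosed {v : G | |ψ (v * x) - ψ x| ≤ δ} := by
    apply isClosed_le _ continuous_const
    exact ((hc.comp (continuous_mul_right x)).sub continuous_const).abs
  have hsub : W ⊆ {v : G | |ψ (v * x) - ψ x| ≤ δ} := by
    intro v hv
    have : (v * x) * x⁻¹ ∈ W := by rwa [mul_inv_cancel_right]
    exact (hW (v * x) x this).le
  exact closure_minimal hsub hCc hs

/-- Corollary 2.7: every locally compact topological group is proximally fine with respect
to its right uniformity. -/
theorem stmt_7 {G : Type u} [Group G] [TopologicalSpace G] [IsTopologicalGroup G]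
    [LocallyCompactSpace G] :
    ProxFineGroup ‹TopologicalSpace G› := by
  classical
  intro Y _ f hprox V hV
  by_contra hnot
  push_neg at hnot
  obtain ⟨d, d_refl, d_symm, d_tri, d_nonneg, d_le_one, d_unif, ε, hε, hε2, hεV⟩ :=
    exists_bdd_pseudometric hV
  -- the proximal-continuity oracle, specialized to d-Lipschitz functions
  have hmod : ∀ φ : Y → ℝ, (∀ y z, |φ y - φ z| ≤ d y z) → (∀ y, |φ y| ≤ 1) →
      ∀ η : ℝ, 0 < η → ∃ W ∈ 𝓝 (1 : G), ∀ g h' : G, g * h'⁻¹ ∈ W →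
        |φ (f g) - φ (f h')| < η := by
    intro φ hlip hbd η hη
    have hUC : UniformContinuous φ := by
      rw [uniformContinuous_def]
      intro r hr
      rcases Metric.mem_uniformity_dist.1 hr with ⟨θ, hθ, hsub⟩
      refine mem_of_superset (d_unif θ hθ) ?_
      intro p hp
      exact hsub (lt_of_le_of_lt (by rw [Real.dist_eq]; exact hlip p.1 p.2) hp)
    obtain ⟨W, hW, hWosc⟩ := hprox φ hUC ⟨1, hbd⟩ {p : ℝ × ℝ | dist p.1 p.2 < η}
      (Metric.dist_mem_uniformity hη)
    refine ⟨W, hW, fun g h' hgh => ?_⟩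
    have := hWosc g h' hgh
    rw [← Real.dist_eq]
    exact this
  set δ : ℝ := ε/100 with hδdef
  have hδpos : 0 < δ := by positivity
  have hlip1 : ∀ p : Y, ∀ y z, |d y p - d z p| ≤ d y z := by
    intro p y z
    rw [abs_sub_le_iff]
    constructor
    · have := d_tri y z p; linarith
    · have h1 := d_tri z y p
      have h2 := d_symm z y
      linarith
  have hbd1 : ∀ p : Y, ∀ y, |d y p| ≤ 1 := by
    intro p y
    rw [abs_of_nonneg (d_nonneg _ _)]
    exact d_le_one _ _
  have hsing : ∀ p : Y, ∃ W ∈ 𝓝 (1:G), ∀ g h' : G, g * h'⁻¹ ∈ W →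
      |d (f g) p - d (f h') p| < δ := fun p =>
    hmod (fun y => d y p) (hlip1 p) (hbd1 p) δ hδpos
  choose Wp hWp hWosc using hsing
  have hbad : ∀ U : Set G, U ∈ 𝓝 (1:G) → ∃ g h' : G, g * h'⁻¹ ∈ U ∧ ε ≤ d (f g) (f h') := by
    intro U hU
    obtain ⟨g, h', hgh, hV'⟩ := hnot U hU
    refine ⟨g, h', hgh, ?_⟩
    by_contra hlt
    push_neg at hlt
    exact hV' (hεV _ _ hlt)
  choose bg bh hbmem hbsep using hbad
  obtain ⟨K, hKc, hK⟩ := exists_compact_mem_nhds (1 : G)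
  -- recursive construction of bad pairs with accumulated moduli
  set step : {U : Set G // U ∈ 𝓝 (1:G)} → {U : Set G // U ∈ 𝓝 (1:G)} := fun p =>
    ⟨p.1 ∩ Wp (f (bg p.1 p.2)) ∩ Wp (f (bh p.1 p.2)),
      inter_mem (inter_mem p.2 (hWp _)) (hWp _)⟩ with hstepdef
  set S : ℕ → {U : Set G // U ∈ 𝓝 (1:G)} := fun n => step^[n] ⟨K, hK⟩ with hSdef
  set a : ℕ → G := fun n => bh (S n).1 (S n).2 with hadef
  set b : ℕ → G := fun n => bg (S n).1 (S n).2 with hbdef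
  have hSsucc : ∀ n, S (n+1) = step (S n) := fun n => Function.iterate_succ_apply' step n _
  have htmem : ∀ n, b n * (a n)⁻¹ ∈ (S n).1 := fun n => hbmem (S n).1 (S n).2
  have htsep : ∀ n, ε ≤ d (f (b n)) (f (a n)) := fun n => hbsep (S n).1 (S n).2
  have hSb : ∀ n, (S (n+1)).1 ⊆ Wp (f (b n)) := by
    intro n x hx
    rw [hSsucc n] at hx
    exact hx.1.2
  have hSa : ∀ n, (S (n+1)).1 ⊆ Wp (f (a n)) := by
    intro n x hx
    rw [hSsucc n] at hx
    exact hx.2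
  have hSsub : ∀ n, (S (n+1)).1 ⊆ (S n).1 := by
    intro n x hx
    rw [hSsucc n] at hx
    exact hx.1.1
  have hSle : ∀ n m : ℕ, n ≤ m → (S m).1 ⊆ (S n).1 := by
    intro n m h
    induction h with
    | refl => exact subset_rfl
    | step _ ih => exact fun x hx => ih (hSsub _ hx)
  have hS0 : (S 0).1 = K := rfl
  have htK : ∀ n, b n * (a n)⁻¹ ∈ K := fun n => hS0 ▸ hSle 0 n (Nat.zero_le n) (htmem n)
  have hosc_a : ∀ n m : ℕ, n < m → |d (f (b m)) (f (a n)) - d (f (a m)) (f (a n))| < δ := by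
    intro n m hnm
    exact hWosc (f (a n)) (b m) (a m) (hSa n (hSle (n+1) m hnm (htmem m)))
  have hosc_b : ∀ n m : ℕ, n < m → |d (f (b m)) (f (b n)) - d (f (a m)) (f (b n))| < δ := by
    intro n m hnm
    exact hWosc (f (b n)) (b m) (a m) (hSb n (hSle (n+1) m hnm (htmem m)))
  -- double dichotomy: an infinite index set with fully separated images
  have hSEP : ∃ M : Set ℕ, M.Infinite ∧
      ∀ j ∈ M, ∀ m ∈ M, ε/16 - δ ≤ d (f (b m)) (f (a j)) := by
    rcases sep_or_cluster d d_symm (fun m => f (a m)) Set.univ Set.infinite_univ (ε/4) with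
      ⟨p, hpInf⟩ | ⟨M1, hM1sub, hM1inf, hM1sep⟩
    · refine ⟨{m | m ∈ Set.univ ∧ d (f (a m)) p < ε/4}, hpInf, ?_⟩
      intro j hj m hm
      rcases eq_or_ne j m with rfl | hne
      · have := htsep j
        rw [hδdef]; linarith
      · have h1 := d_tri (f (a j)) p (f (a m))
        have h2 := d_symm (f (a m)) p
        have h3 := d_tri (f (b m)) (f (a j)) (f (a m))
        have h4 := htsep m
        have h5 := hj.2
        have h6 := hm.2
        rw [hδdef]; linarith
    · rcases sep_or_cluster d d_symm (fun m => f (b m)) M1 hM1inf (ε/16) with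
        ⟨q, hqInf⟩ | ⟨M, hMsub, hMinf, hMsep⟩
      · refine ⟨{m | m ∈ M1 ∧ d (f (b m)) q < ε/16}, hqInf, ?_⟩
        intro j hj m hm
        rcases eq_or_ne j m with rfl | hne
        · have := htsep j
          rw [hδdef]; linarith
        · have h1 := d_tri (f (b j)) q (f (b m))
          have h2 := d_symm (f (b m)) q
          have h3 := d_tri (f (b j)) (f (b m)) (f (a j))
          have h4 := htsep j
          have h5 := hj.2
          have h6 := hm.2
          have h7 := d_symm (f (b m)) (f (a j))
          rw [hδdef]; linarith
      · refine ⟨M, hMinf, ?_⟩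
        intro j hj m hm
        rcases lt_trichotomy j m with h | rfl | h
        · have h1 := hosc_a j m h
          have h2 : ε/4 ≤ d (f (a m)) (f (a j)) :=
            hM1sep m (hMsub hm) j (hMsub hj) (Nat.ne_of_gt h)
          rw [abs_sub_lt_iff] at h1
          rw [hδdef] at h1 ⊢
          linarith [h1.2]
        · have := htsep j
          rw [hδdef]; linarith
        · have h1 := hosc_b m j h
          have h2 : ε/16 ≤ d (f (b j)) (f (b m)) := hMsep j hj m hm (Nat.ne_of_gt h)
          have h3 := d_symm (f (a j)) (f (b m))
          rw [abs_sub_lt_iff] at h1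
          rw [hδdef] at h1 ⊢
          linarith [h1.2]
  obtain ⟨M, hMinf, hSEP⟩ := hSEP
  set ρ : ℝ := ε/16 - δ with hρdef
  have hρpos : 0 < ρ := by rw [hρdef, hδdef]; linarith
  have hMinf' : (setOf (· ∈ M)).Infinite := hMinf
  set e : ℕ → ℕ := fun k => Nat.nth (· ∈ M) k with hedef
  have heM : ∀ k, e k ∈ M := fun k => Nat.nth_mem_of_infinite hMinf' k
  have hemono : StrictMono e := Nat.nth_strictMono hMinf'
  have hege : ∀ k, k ≤ e k := fun k => hemono.le_apply
  -- a cluster point of the differences in the compact set K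
  have hFle : map (fun k => b (e k) * (a (e k))⁻¹) atTop ≤ 𝓟 K :=
    le_principal_iff.2 (mem_map.2 (Eventually.of_forall fun k => htK (e k)))
  obtain ⟨s, hsK, hscl⟩ := hKc hFle
  have htail : ∀ N : ℕ, s ∈ closure {g : G | ∃ k, N ≤ k ∧ g = b (e k) * (a (e k))⁻¹} := by
    intro N
    rw [mem_closure_iff_clusterPt]
    apply hscl.mono
    rw [le_principal_iff, mem_map]
    filter_upwards [eventually_ge_atTop N] with k hk
    exact ⟨k, hk, rfl⟩
  have hscl_a : ∀ j : ℕ, s ∈ closure (Wp (f (a j))) := by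
    intro j
    refine closure_mono ?_ (htail (j+1))
    rintro g ⟨k, hk, rfl⟩
    exact hSa j (hSle (j+1) (e k) (le_trans hk (hege k)) (htmem (e k)))
  have hcont : ∀ p : Y, Continuous (fun x : G => d (f x) p) := fun p =>
    cont_of_mod _ (fun η hη => hmod (fun y => d y p) (hlip1 p) (hbd1 p) η hη)
  have hs_osc : ∀ j : ℕ, ∀ x : G, |d (f (s * x)) (f (a j)) - d (f x) (f (a j))| ≤ δ :=
    fun j x => trans_osc _ (hcont (f (a j))) (Wp (f (a j))) (hWosc (f (a j))) (hscl_a j) x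
  -- the distance-to-A function
  have hMne : M.Nonempty := hMinf.nonempty
  set ψ : G → ℝ := fun x => sInf ((fun j => d (f x) (f (a j))) '' M) with hψdef
  have hψnn : ∀ x, 0 ≤ ψ x := by
    intro x
    apply le_csInf (hMne.image _)
    rintro _ ⟨j, hj, rfl⟩
    exact d_nonneg _ _
  have hψ0 : ∀ m ∈ M, ψ (a m) ≤ 0 := by
    intro m hm
    have h1 : ψ (a m) ≤ d (f (a m)) (f (a m)) :=
      csInf_le ⟨0, by rintro _ ⟨j, hj, rfl⟩; exact d_nonneg _ _⟩ (mem_image_of_mem _ hm)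
    rwa [d_refl] at h1
  have hψb : ∀ m ∈ M, ρ ≤ ψ (b m) := by
    intro m hm
    apply le_csInf (hMne.image _)
    rintro _ ⟨j, hj, rfl⟩
    exact hSEP j hj m hm
  have hψs : ∀ x, |ψ (s * x) - ψ x| ≤ δ := by
    intro x
    exact abs_csInf_sub_csInf_le hMne _ _ (fun j _ => d_nonneg _ _) (fun j _ => d_nonneg _ _)
      (fun j _ => hs_osc j x)
  -- uniform modulus for ψ
  have hψmod : ∃ U ∈ 𝓝 (1:G), ∀ g h' : G, g * h'⁻¹ ∈ U → |ψ g - ψ h'| < ρ/2 := by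
    apply hmod (fun y => sInf ((fun j => d y (f (a j))) '' M))
    · intro y z
      exact abs_csInf_sub_csInf_le hMne _ _ (fun j _ => d_nonneg _ _) (fun j _ => d_nonneg _ _)
        (fun j _ => hlip1 (f (a j)) y z)
    · intro y
      rw [abs_of_nonneg]
      · obtain ⟨j0, hj0⟩ := hMne
        exact le_trans (csInf_le ⟨0, by rintro _ ⟨j, hj, rfl⟩; exact d_nonneg _ _⟩
          (mem_image_of_mem _ hj0)) (d_le_one _ _)
      · apply le_csInf (hMne.image _)
        rintro _ ⟨j, hj, rfl⟩
        exact d_nonneg _ _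
    · linarith
  obtain ⟨U, hU, hUosc⟩ := hψmod
  have hsnb : {g : G | g * s⁻¹ ∈ U} ∈ 𝓝 s := by
    rw [← nhds_translation_mul_inv s]
    exact preimage_mem_comap hU
  obtain ⟨g0, hg0U, hg0t⟩ := mem_closure_iff_nhds.1 (htail 0) _ hsnb
  obtain ⟨k, -, rfl⟩ := hg0t
  have hmM : e k ∈ M := heM k
  have h1 : |ψ (b (e k)) - ψ (s * a (e k))| < ρ/2 := by
    apply hUosc
    show b (e k) * (s * a (e k))⁻¹ ∈ U
    rw [mul_inv_rev, ← mul_assoc]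
    exact hg0U
  have h2 : ψ (s * a (e k)) ≤ δ := by
    have h3 := hψs (a (e k))
    have h4 := hψ0 (e k) hmM
    have h5 := hψnn (a (e k))
    have h6 := hψnn (s * a (e k))
    rw [abs_le] at h3
    linarith [h3.2]
  have h3 : ρ ≤ ψ (b (e k)) := hψb (e k) hmM
  rw [abs_sub_lt_iff] at h1
  rw [hρdef, hδdef] at *
  linarith [h1.1]

end AuxProxFine
end

section
/- The subgroup S of finitary permutations is a closed subgroup of (G, τ), where G = Sym(ℕ) carries the topology τ. Consequently the quotient group G/S with the quotient topology is Hausdorff. -/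
/-- The Samuel (precompact) uniformity on `ℕ`: a basis of entourages is given by the sets
`⋃ i, A i × A i` for `{A 1, …, A n}` a finite partition of `ℕ`; equivalently, it is the
infimum of the uniformities pulled back from finite discrete uniform spaces, a basis being
given by the sets `{(x, y) | c x = c y}` for `c : ℕ → Fin n`. -/
noncomputable def samuelNat : UniformSpace ℕ :=
  ⨅ (n : ℕ) (c : ℕ → Fin n), UniformSpace.comap c ⊥

/-- The topology `τ` on `G = Sym(ℕ)`: the topology of uniform convergence when the target `ℕ`
carries the Samuel uniformity.  A basis of neighborhoods of the identity is given by the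
subgroups `H_π = {g : g (A i) = A i, i = 1, …, n}`, `π = {A 1, …, A n}` a finite partition
of `ℕ`. -/
noncomputable def tauPerm : TopologicalSpace (Equiv.Perm ℕ) :=
  TopologicalSpace.induced (fun g => UniformFun.ofFun (⇑g))
    (@UniformFun.uniformSpace ℕ ℕ samuelNat).toTopologicalSpace

/-- The subgroup `S` of finitary permutations of `ℕ`, i.e. those moving only finitely many
points. -/
def finitaryS : Subgroup (Equiv.Perm ℕ) where
  carrier := {g | {x | g x ≠ x}.Finite}
  one_mem' := by simp
  mul_mem' := by
    intro a b ha hb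
    refine (ha.union hb).subset fun x hx => ?_
    by_cases h : b x = x
    · exact Or.inl (by simpa [Equiv.Perm.mul_apply, h] using hx)
    · exact Or.inr h
  inv_mem' := by
    intro a ha
    have h : {x | a⁻¹ x ≠ x} = {x | a x ≠ x} := by
      ext x
      simp only [Set.mem_setOf_eq, ne_eq, Equiv.Perm.inv_eq_iff_eq]
      exact not_congr eq_comm
    show {x | a⁻¹ x ≠ x}.Finite
    rw [h]; exact ha

/-- `S` is a normal subgroup of `G`. -/
instance finitaryS_normal : finitaryS.Normal := by
  constructor
  intro h hh g
  have hsub : {x | (g * h * g⁻¹) x ≠ x} ⊆ (fun x => g⁻¹ x) ⁻¹' {x | h x ≠ x} := by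
    intro x hx hc
    apply hx
    simp only [Equiv.Perm.mul_apply, hc]
    exact g.apply_symm_apply x
  exact (hh.preimage (fun y _ z _ hyz => (Equiv.injective g⁻¹) hyz)).subset hsub


open Filter Topology Uniformity UniformConvergence

/-- Index type for the basic entourages: an `n : ℕ` with a coloring `ℕ → Fin n`. -/
abbrev ColIdx : Type := Σ n : ℕ, ℕ → Fin n

lemma samuel_hasBasis :
    (@uniformity ℕ samuelNat).HasBasis (fun _ : ColIdx => True)
      (fun p => {q : ℕ × ℕ | p.2 q.1 = p.2 q.2}) := by
  have h1 : @uniformity ℕ samuelNat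
      = ⨅ p : ColIdx, 𝓟 {q : ℕ × ℕ | p.2 q.1 = p.2 q.2} := by
    rw [samuelNat, iInf_uniformity, iInf_sigma]
    refine iInf_congr fun n => ?_
    rw [iInf_uniformity]
    refine iInf_congr fun c => ?_
    show Filter.comap (fun p : ℕ × ℕ => (c p.1, c p.2)) (𝓤[(⊥ : UniformSpace (Fin n))]) = _
    rw [bot_uniformity, Filter.comap_principal]
    rfl
  rw [h1]
  have : Nonempty ColIdx := ⟨⟨1, fun _ => 0⟩⟩
  refine Filter.hasBasis_iInf_principal ?_
  rintro ⟨n₁, c₁⟩ ⟨n₂, c₂⟩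
  refine ⟨⟨n₁ * n₂, fun x => finProdFinEquiv (c₁ x, c₂ x)⟩, ?_, ?_⟩
  · intro q hq
    have h := finProdFinEquiv.injective hq
    exact (Prod.mk.injEq _ _ _ _ ▸ h :
      c₁ q.1 = c₁ q.2 ∧ c₂ q.1 = c₂ q.2).1
  · intro q hq
    have h := finProdFinEquiv.injective hq
    exact (Prod.mk.injEq _ _ _ _ ▸ h :
      c₁ q.1 = c₁ q.2 ∧ c₂ q.1 = c₂ q.2).2

lemma tau_nhds_basis (g : Equiv.Perm ℕ) :
    (@nhds _ tauPerm g).HasBasis (fun _ : ColIdx => True)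
      (fun p => {h : Equiv.Perm ℕ | ∀ x, p.2 (g x) = p.2 (h x)}) := by
  letI : UniformSpace ℕ := samuelNat
  letI : TopologicalSpace (Equiv.Perm ℕ) := tauPerm
  have hb : (𝓝 (UniformFun.ofFun (⇑g) : ℕ →ᵤ ℕ)).HasBasis (fun _ : ColIdx => True)
      (fun p => { u : ℕ →ᵤ ℕ |
        (UniformFun.ofFun (⇑g), u) ∈ UniformFun.gen ℕ ℕ {q : ℕ × ℕ | p.2 q.1 = p.2 q.2} }) :=
    UniformFun.hasBasis_nhds_of_basis ℕ ℕ _ samuel_hasBasis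
  have h2 : @nhds _ tauPerm g = Filter.comap (fun h : Equiv.Perm ℕ => UniformFun.ofFun (⇑h))
      (𝓝 (UniformFun.ofFun (⇑g))) := nhds_induced _ _
  rw [h2]
  exact (hb.comap _).to_hasBasis
    (fun p _ => ⟨p, trivial, fun h hh => hh⟩)
    (fun p _ => ⟨p, trivial, fun h hh => hh⟩)

lemma tau_mem_nhds (g : Equiv.Perm ℕ) {n : ℕ} (c : ℕ → Fin n) :
    {h : Equiv.Perm ℕ | ∀ x, c (g x) = c (h x)} ∈ @nhds _ tauPerm g :=
  (tau_nhds_basis g).mem_of_mem (i := ⟨n, c⟩) trivial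

lemma tau_topologicalGroup : @IsTopologicalGroup (Equiv.Perm ℕ) tauPerm _ := by
  letI : TopologicalSpace (Equiv.Perm ℕ) := tauPerm
  refine { continuous_mul := ?_, continuous_inv := ?_ }
  · refine continuous_iff_continuousAt.2 ?_
    rintro ⟨g, h⟩
    rw [ContinuousAt, (tau_nhds_basis (g * h)).tendsto_right_iff]
    rintro ⟨n, c⟩ -
    have h1 : {g' : Equiv.Perm ℕ | ∀ y, c (g y) = c (g' y)} ×ˢ
        {h' : Equiv.Perm ℕ | ∀ x, (c ∘ g) (h x) = (c ∘ g) (h' x)} ∈ 𝓝 (g, h) := by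
      rw [nhds_prod_eq]
      exact Filter.prod_mem_prod (tau_mem_nhds g c) (tau_mem_nhds h (c ∘ g))
    filter_upwards [h1]
    rintro ⟨g', h'⟩ ⟨hg', hh'⟩ x
    simp only [Equiv.Perm.mul_apply]
    calc c (g (h x)) = c (g (h' x)) := hh' x
    _ = c (g' (h' x)) := hg' (h' x)
  · refine continuous_iff_continuousAt.2 ?_
    intro g
    rw [ContinuousAt, (tau_nhds_basis (g⁻¹ : Equiv.Perm ℕ)).tendsto_right_iff]
    rintro ⟨n, c⟩ -
    filter_upwards [tau_mem_nhds g (fun y => c (g⁻¹ y))]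
    intro f hf x
    have := hf (f⁻¹ x)
    simp only [Equiv.Perm.inv_def, Equiv.symm_apply_apply, Equiv.apply_symm_apply] at this
    exact this.symm

lemma finitaryS_closed : @IsClosed (Equiv.Perm ℕ) tauPerm (finitaryS : Set (Equiv.Perm ℕ)) := by
  letI : TopologicalSpace (Equiv.Perm ℕ) := tauPerm
  rw [← isOpen_compl_iff, isOpen_iff_mem_nhds]
  intro g hg
  have hinf : {x | g x ≠ x}.Infinite := hg
  -- choose fresh points avoiding a finite set
  have hF : ∀ s : Finset ℕ, ∃ x, g x ≠ x ∧ x ∉ s ∧ g x ∉ s ∧ ∀ y ∈ s, g y ≠ x := by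
    intro s
    have : ({x | g x ≠ x} \ (↑s ∪ (⇑g ⁻¹' ↑s) ∪ (⇑g '' ↑s))).Infinite :=
      hinf.diff ((s.finite_toSet.union (s.finite_toSet.preimage
        (g.injective.injOn))).union (s.finite_toSet.image _))
    obtain ⟨x, hx⟩ := this.nonempty
    refine ⟨x, hx.1, ?_, ?_, ?_⟩
    · exact fun h => hx.2 (Or.inl (Or.inl h))
    · exact fun h => hx.2 (Or.inl (Or.inr h))
    · exact fun y hy hxy => hx.2 (Or.inr ⟨y, hy, hxy⟩)
  choose F hF1 hF2 hF3 hF4 using hF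
  -- iterated finsets
  let t : ℕ → Finset ℕ := fun n => Nat.rec ∅ (fun _ s => insert (F s) s) n
  have ht_succ : ∀ n, t (n + 1) = insert (F (t n)) (t n) := fun n => rfl
  have ht_mono : Monotone t := by
    refine monotone_nat_of_le_succ fun n => ?_
    rw [ht_succ]; exact Finset.subset_insert _ _
  set seq : ℕ → ℕ := fun n => F (t n) with hseq
  have hmem : ∀ {n m}, n < m → seq n ∈ t m := by
    intro n m hnm
    have : seq n ∈ t (n + 1) := by rw [ht_succ]; exact Finset.mem_insert_self _ _
    exact ht_mono hnm this
  have hinj : Function.Injective seq := by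
    intro n m hnm
    by_contra hne
    rcases Nat.lt_or_ge n m with h | h
    · have := hmem h; rw [hnm] at this; exact hF2 (t m) this
    · have := hmem (lt_of_le_of_ne h (Ne.symm hne)); rw [← hnm] at this
      exact hF2 (t n) this
  have key : ∀ a ∈ Set.range seq, ∀ b ∈ Set.range seq, g a ≠ b := by
    rintro a ⟨n, rfl⟩ b ⟨m, rfl⟩
    rcases lt_trichotomy n m with h | h | h
    · exact hF4 (t m) _ (hmem h)
    · subst h; exact hF1 (t n)
    · intro hc; exact hF3 (t n) (hc ▸ hmem h)
  -- the coloring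
  classical
  let c : ℕ → Fin 2 := fun x => if x ∈ Set.range seq then 0 else 1
  refine Filter.mem_of_superset (tau_mem_nhds g c) ?_
  intro h hh
  have hsub : Set.range seq ⊆ {x | h x ≠ x} := by
    rintro a ⟨n, rfl⟩
    have hga : g (seq n) ∉ Set.range seq := by
      rintro ⟨m, hm⟩
      exact key (seq n) ⟨n, rfl⟩ (seq m) ⟨m, rfl⟩ hm.symm
    have h1 : c (g (seq n)) = 1 := if_neg hga
    have h2 : c (h (seq n)) = 1 := (hh (seq n)).symm.trans h1
    have hnot : h (seq n) ∉ Set.range seq := by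
      intro hmem'
      simp only [c, if_pos hmem'] at h2
      exact absurd h2 (by decide)
    intro hc
    exact hnot ⟨n, hc.symm⟩
  intro hfin
  exact (Set.infinite_range_of_injective hinj).mono hsub hfin

/-- `S` is a closed subgroup of `(G, τ)`, and the quotient group `G/S`, with the
quotient topology, is Hausdorff. -/
theorem stmt_9 :
    @IsClosed (Equiv.Perm ℕ) tauPerm (finitaryS : Set (Equiv.Perm ℕ)) ∧
      @T2Space (Equiv.Perm ℕ ⧸ finitaryS)
        (TopologicalSpace.coinduced
          (QuotientGroup.mk : Equiv.Perm ℕ → Equiv.Perm ℕ ⧸ finitaryS) tauPerm) := 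
by
  letI : TopologicalSpace (Equiv.Perm ℕ) := tauPerm
  haveI := tau_topologicalGroup
  have hc := finitaryS_closed
  refine ⟨hc, ?_⟩
  haveI : IsClosed (finitaryS : Set (Equiv.Perm ℕ)) := hc
  have ht : T2Space (Equiv.Perm ℕ ⧸ finitaryS) := inferInstance
  exact ht
end

section
/- Let G = Sym(ℕ) carry the topology τ, fix k ∈ ℕ, and let φ : G → ℕ be the evaluation map φ(g) = g(k), where ℕ is equipped with the discrete uniformity. Then φ is left uniformly continuous and right proximally continuous (with respect to the left and right uniformities of (G, τ)). -/
open scoped UniformConvergence in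
lemma aux_mem_stmt10 (n : ℕ) (c : ℕ → Fin n) :
    {g : Equiv.Perm ℕ | ∀ x, c (g x) = c x} ∈ @nhds _ tauPerm 1 := by
  have hE : {p : ℕ × ℕ | c p.1 = c p.2} ∈ @uniformity ℕ samuelNat := by
    rw [samuelNat, iInf_uniformity]
    refine Filter.mem_iInf_of_mem n ?_
    rw [iInf_uniformity]
    refine Filter.mem_iInf_of_mem c ?_
    rw [uniformity_comap, bot_uniformity]
    exact Filter.mem_comap.2 ⟨SetRel.id, Filter.mem_principal_self _,
      by intro p hp; simpa [SetRel.id] using hp⟩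
  have hnb := @UniformFun.hasBasis_nhds ℕ ℕ samuelNat (UniformFun.ofFun (⇑(1 : Equiv.Perm ℕ)))
  rw [tauPerm, @nhds_induced _ _ ((@UniformFun.uniformSpace ℕ ℕ samuelNat).toTopologicalSpace) _ _]
  refine Filter.mem_comap.2 ⟨_, hnb.mem_of_mem hE, ?_⟩
  intro g hg x
  exact (hg x).symm

/-- Proposition 3.1(1): the evaluation map `φ : g ↦ g k` from `(G, τ)` to `ℕ` with the
discrete uniformity is left uniformly continuous and right proximally continuous. -/
theorem stmt_10 (k : ℕ) :
    @LeftUC (Equiv.Perm ℕ) _ tauPerm ℕ ⊥ (fun g => g k) ∧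
      @RightProxCont (Equiv.Perm ℕ) _ tauPerm ℕ ⊥ (fun g => g k) := by
  constructor
  · intro V hV
    have hVd : SetRel.id ⊆ V := by
      rw [show (@uniformity ℕ ⊥) = Filter.principal SetRel.id from rfl] at hV
      exact hV
    set c : ℕ → Fin 2 := fun x => if x = k then 0 else 1 with hc
    refine ⟨_, aux_mem_stmt10 2 c, ?_⟩
    intro g h hgh
    have := hgh k
    simp only [Equiv.Perm.mul_apply, hc] at this
    have hk : (g⁻¹ : Equiv.Perm ℕ) (h k) = k := by
      by_contra hne
      simp [hne] at this
      exact hne this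
    have : h k = g k := by
      have := congrArg g hk
      simpa using this
    exact hVd (by simp [this, SetRel.id])
  · intro φ _ hbd V hV
    obtain ⟨C, hC⟩ := hbd
    obtain ⟨ε, hε, hball⟩ := Metric.mem_uniformity_dist.1 hV
    have hC0 : 0 ≤ C := le_trans (abs_nonneg _) (hC 0)
    set N : ℕ := ⌈(2 * C) / ε⌉₊ with hN
    have hnn : ∀ y, 0 ≤ (φ y + C) / ε := fun y =>
      div_nonneg (by have := (abs_le.1 (hC y)).1; linarith) hε.le
    have hlt : ∀ y, ⌊(φ y + C) / ε⌋₊ < N + 1 := by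
      intro y
      have h1 : (φ y + C) / ε ≤ (2 * C) / ε := by
        apply (div_le_div_iff_of_pos_right hε).mpr
        have := (abs_le.1 (hC y)).2
        linarith
      have h2 : ⌊(φ y + C) / ε⌋₊ ≤ ⌊(2 * C) / ε⌋₊ := Nat.floor_le_floor h1
      have h3 : ⌊(2 * C) / ε⌋₊ ≤ N := Nat.floor_le_ceil _
      omega
    set c : ℕ → Fin (N + 1) := fun y => ⟨⌊(φ y + C) / ε⌋₊, hlt y⟩ with hcdef
    refine ⟨_, aux_mem_stmt10 (N + 1) c, ?_⟩
    intro g h hgh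
    have hx := hgh (h k)
    have hgk : g k = (g * h⁻¹) (h k) := by simp
    have hfl : ⌊(φ (g k) + C) / ε⌋₊ = ⌊(φ (h k) + C) / ε⌋₊ := by
      have := hx
      rw [← hgk] at this
      simpa [hcdef, Fin.ext_iff] using this
    set x := (φ (g k) + C) / ε
    set y := (φ (h k) + C) / ε
    have hx1 : x < ⌊y⌋₊ + 1 := by rw [← hfl]; exact Nat.lt_floor_add_one x
    have hy1 : y < ⌊x⌋₊ + 1 := by rw [hfl]; exact Nat.lt_floor_add_one y
    have hx2 : (⌊x⌋₊ : ℝ) ≤ x := Nat.floor_le (hnn _)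
    have hy2 : (⌊y⌋₊ : ℝ) ≤ y := Nat.floor_le (hnn _)
    have hflR : ((⌊x⌋₊ : ℝ)) = (⌊y⌋₊ : ℝ) := by exact_mod_cast congrArg (Nat.cast (R := ℝ)) hfl
    have habs : |x - y| < 1 := abs_sub_lt_iff.2 ⟨by linarith, by linarith⟩
    have hdiff : x - y = (φ (g k) - φ (h k)) / ε := by
      show (φ (g k) + C) / ε - (φ (h k) + C) / ε = _
      ring
    have : |φ (g k) - φ (h k)| < ε := by
      rw [hdiff, abs_div, abs_of_pos hε, div_lt_one hε] at habs
      exact habs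
    exact hball (by simpa [Real.dist_eq] using this)
end

section
/- Let S be the group of finitary permutations of ℕ with the topology τ, fix k ∈ ℕ, and let φ : S → ℕ be the evaluation map φ(g) = g(k). If 𝒱 is any uniformity on ℕ such that φ : S → (ℕ, 𝒱) is right uniformly continuous with respect to the right uniformity of (S, τ), then 𝒱 is contained in the Samuel uniformity 𝒰 of ℕ. -/
open Filter in
private lemma samuel_eq' :
    @uniformity ℕ samuelNat =
      ⨅ p : Σ n : ℕ, ℕ → Fin n, 𝓟 {q : ℕ × ℕ | p.2 q.1 = p.2 q.2} := by
  rw [iInf_sigma, samuelNat]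
  simp only [iInf_uniformity, uniformity_comap, bot_uniformity, comap_principal]
  refine iInf_congr fun n => iInf_congr fun c => ?_
  congr 1

open Filter in
private lemma samuel_basic' (n : ℕ) (c : ℕ → Fin n) :
    {p : ℕ × ℕ | c p.1 = c p.2} ∈ @uniformity ℕ samuelNat := by
  rw [samuel_eq']
  exact mem_iInf_of_mem ⟨n, c⟩ (mem_principal_self _)

open Filter in
private lemma samuel_exists' {E : Set (ℕ × ℕ)} (hE : E ∈ @uniformity ℕ samuelNat) :
    ∃ n, ∃ c : ℕ → Fin n, {p : ℕ × ℕ | c p.1 = c p.2} ⊆ E := by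
  rw [samuel_eq'] at hE
  have hdir : Directed (· ≥ ·)
      (fun p : Σ n : ℕ, ℕ → Fin n => 𝓟 {q : ℕ × ℕ | p.2 q.1 = p.2 q.2}) := by
    rintro ⟨n1, c1⟩ ⟨n2, c2⟩
    refine ⟨⟨n1 * n2, fun x => finProdFinEquiv (c1 x, c2 x)⟩, ?_, ?_⟩ <;>
      · refine principal_mono.2 fun q hq => ?_
        have := finProdFinEquiv.injective hq
        simp only [Prod.mk.injEq] at this
        first
        | exact this.1
        | exact this.2
  haveI : Nonempty (Σ n : ℕ, ℕ → Fin n) := ⟨⟨1, fun _ => 0⟩⟩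
  obtain ⟨⟨n, c⟩, hc⟩ := (mem_iInf_of_directed hdir E).1 hE
  exact ⟨n, c, mem_principal.1 hc⟩

private lemma swap_mem_finitaryS' (a b : ℕ) : Equiv.swap a b ∈ finitaryS := by
  refine (Set.toFinite {a, b}).subset fun x hx => ?_
  by_contra hxab
  simp only [Set.mem_insert_iff, Set.mem_singleton_iff, not_or] at hxab
  exact hx (Equiv.swap_apply_of_ne_of_ne hxab.1 hxab.2)

/-- Proposition 3.1(2), second half: if `𝒱` is a uniformity on `ℕ` such that the evaluation
map `φ : g ↦ g k` on the group `S` of finitary permutations (with the topology induced by `τ`)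
is right uniformly continuous into `(ℕ, 𝒱)`, then every `𝒱`-entourage is an entourage of the
Samuel uniformity, i.e. `𝒱 ⊆ 𝒰`. -/
theorem stmt_12 (k : ℕ) (V : UniformSpace ℕ)
    (h : @RightUC ↥finitaryS _ (TopologicalSpace.induced Subtype.val tauPerm) ℕ V
      (fun g => (g : Equiv.Perm ℕ) k)) :
    ∀ s ∈ @uniformity ℕ V, s ∈ @uniformity ℕ samuelNat := by
  intro s hs
  obtain ⟨U, hU, hUs⟩ := h s hs
  rw [@nhds_induced (Equiv.Perm ℕ) ↥finitaryS tauPerm Subtype.val 1, Filter.mem_comap] at hU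
  obtain ⟨U1, hU1, hU1sub⟩ := hU
  rw [tauPerm,
    @nhds_induced (UniformFun ℕ ℕ) (Equiv.Perm ℕ)
      (@UniformFun.uniformSpace ℕ ℕ samuelNat).toTopologicalSpace
      (fun g => UniformFun.ofFun (⇑g)) ((1 : ↥finitaryS) : Equiv.Perm ℕ),
    Filter.mem_comap] at hU1
  obtain ⟨U2, hU2, hU2sub⟩ := hU1
  rw [@nhds_eq_comap_uniformity (UniformFun ℕ ℕ) (@UniformFun.uniformSpace ℕ ℕ samuelNat),
    Filter.mem_comap] at hU2
  obtain ⟨W, hW, hWsub⟩ := hU2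
  rw [(@UniformFun.hasBasis_uniformity ℕ ℕ samuelNat).mem_iff] at hW
  obtain ⟨E, hE, hEW⟩ := hW
  obtain ⟨n, c, hc⟩ := samuel_exists' hE
  refine Filter.mem_of_superset (samuel_basic' n c) ?_
  rintro ⟨x, y⟩ (hxy : c x = c y)
  by_cases hxyeq : x = y
  · subst hxyeq; exact refl_mem_uniformity hs
  have hmemU : ∀ g : ↥finitaryS, (∀ z, c ((g : Equiv.Perm ℕ) z) = c z) → g ∈ U := by
    intro g hg
    apply hU1sub
    apply hU2sub
    apply hWsub
    apply hEW
    intro z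
    apply hc
    show c ((1 : Equiv.Perm ℕ) z) = c ((g : Equiv.Perm ℕ) z)
    simp [hg z]
  set h0 : ↥finitaryS := ⟨Equiv.swap k y, swap_mem_finitaryS' k y⟩
  set g0 : ↥finitaryS := ⟨Equiv.swap x y * Equiv.swap k y,
    finitaryS.mul_mem (swap_mem_finitaryS' x y) (swap_mem_finitaryS' k y)⟩
  have hprod : g0 * h0⁻¹ ∈ U := by
    apply hmemU
    intro z
    have : ((g0 * h0⁻¹ : ↥finitaryS) : Equiv.Perm ℕ) = Equiv.swap x y := by
      push_cast [g0, h0]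
      rw [Equiv.swap_inv, mul_assoc, Equiv.swap_mul_self, mul_one]
    rw [this]
    rcases eq_or_ne z x with rfl | hzx
    · rw [Equiv.swap_apply_left]; exact hxy.symm
    rcases eq_or_ne z y with rfl | hzy
    · rw [Equiv.swap_apply_right]; exact hxy
    · rw [Equiv.swap_apply_of_ne_of_ne hzx hzy]
  have := hUs g0 h0 hprod
  simpa [g0, h0, Equiv.Perm.mul_apply, Equiv.swap_apply_left, Equiv.swap_apply_right] using this
end

section
/- Let H be a subgroup of G = Sym(ℕ), F ⊆ ℕ a finite set, and τ₁ a group topology on H. For k ∈ F let φ_k : H → ℕ be given by φ_k(g) = g(k), ℕ discrete. If for each k ∈ F the map φ_k is right proximally continuous with respect to the right uniformity of (H, τ₁), then on the pointwise stabilizer H_(ℕ∖H·F) the topology τ is coarser than τ₁ (that is, the subspace topology induced by τ on H_(ℕ∖H·F) is contained in the one induced by τ₁). -/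
/-- The set `H·F = {h k : h ∈ H, k ∈ F}`. -/
def orbitSet (H : Subgroup (Equiv.Perm ℕ)) (F : Set ℕ) : Set ℕ :=
  {x | ∃ h ∈ H, ∃ k ∈ F, h k = x}

/-- The pointwise stabilizer `H_(L)` of `L ⊆ ℕ` in the subgroup `H`. -/
def pstab (H : Subgroup (Equiv.Perm ℕ)) (L : Set ℕ) : Set ↥H :=
  {g | ∀ x ∈ L, (g : Equiv.Perm ℕ) x = x}

lemma nat_eq_of_abs_cast_lt_one {a b : ℕ} (h : |(a : ℝ) - (b : ℝ)| < 1) : a = b := by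
  by_contra hne
  have h1 : ((a : ℤ) - (b : ℤ)) ≠ 0 := sub_ne_zero.2 (by exact_mod_cast hne)
  have h2 : (1 : ℝ) ≤ |(a : ℝ) - (b : ℝ)| := by
    have := Int.one_le_abs h1
    calc (1 : ℝ) ≤ (|(a : ℤ) - (b : ℤ)| : ℤ) := by exact_mod_cast this
      _ = |(a : ℝ) - (b : ℝ)| := by push_cast; ring_nf
  linarith

lemma key_lemma (H : Subgroup (Equiv.Perm ℕ)) (F : Set ℕ) (hF : F.Finite)
    (t1 : TopologicalSpace ↥H)
    (hprox : ∀ k ∈ F, @RightProxCont ↥H _ t1 ℕ ⊥ (fun g => (g : Equiv.Perm ℕ) k))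
    {n : ℕ} (c : ℕ → Fin n) :
    ∃ U ∈ @nhds ↥H t1 1, ∀ g g' : ↥H, g * g'⁻¹ ∈ U →
      ∀ x ∈ orbitSet H F, c ((g : Equiv.Perm ℕ) x) = c ((g' : Equiv.Perm ℕ) x) := by
  set φ : ℕ → ℝ := fun a => ((c a : ℕ) : ℝ) with hφ
  have hV : {p : ℝ × ℝ | |p.1 - p.2| < 1} ∈ uniformity ℝ := by
    simpa [Real.dist_eq] using Metric.dist_mem_uniformity (α := ℝ) one_pos
  have hUC : @UniformContinuous ℕ ℝ ⊥ _ φ := by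
    simp only [UniformContinuous, bot_uniformity, Filter.tendsto_def]
    intro V hV
    rw [Filter.mem_principal]
    rintro ⟨a, b⟩ hab
    have hab' : a = b := hab
    simp only [Set.mem_preimage, hab']
    exact refl_mem_uniformity hV
  have hbd : ∃ C, ∀ y, |φ y| ≤ C := by
    refine ⟨n, fun y => ?_⟩
    show |((c y : ℕ) : ℝ)| ≤ (n : ℝ)
    rw [abs_of_nonneg (by positivity)]
    exact_mod_cast le_of_lt (c y).isLt
  choose! U hU1 hU2 using fun k (hk : k ∈ F) =>
    hprox k hk φ hUC hbd {p : ℝ × ℝ | |p.1 - p.2| < 1} hV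
  refine ⟨⋂ k ∈ hF.toFinset, U k, ?_, ?_⟩
  · exact (Filter.biInter_finset_mem _).2 fun k hk => hU1 k (hF.mem_toFinset.1 hk)
  · rintro g g' hgg' x ⟨h, hh, k, hk, hhk⟩
    have hgk : g * ⟨h, hh⟩ * (g' * ⟨h, hh⟩)⁻¹ ∈ U k := by
      have heq : g * ⟨h, hh⟩ * (g' * ⟨h, hh⟩)⁻¹ = g * g'⁻¹ := by group
      rw [heq]
      exact Set.mem_iInter₂.1 hgg' k (hF.mem_toFinset.2 hk)
    have := hU2 k hk (g * ⟨h, hh⟩) (g' * ⟨h, hh⟩) hgk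
    have hlt : |φ (((g * ⟨h, hh⟩ : ↥H) : Equiv.Perm ℕ) k)
        - φ (((g' * ⟨h, hh⟩ : ↥H) : Equiv.Perm ℕ) k)| < 1 := this
    have hcc : c (((g * ⟨h, hh⟩ : ↥H) : Equiv.Perm ℕ) k)
        = c (((g' * ⟨h, hh⟩ : ↥H) : Equiv.Perm ℕ) k) :=
      Fin.val_injective (nat_eq_of_abs_cast_lt_one hlt)
    simpa [Subgroup.coe_mul, Equiv.Perm.mul_apply, hhk] using hcc

/-- Proposition 3.2(1): if `τ₁` is a group topology on a subgroup `H ≤ G = Sym(ℕ)` and, for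
each `k` in the finite set `F`, the evaluation map `φ_k : g ↦ g k` (into discrete `ℕ`) is
right proximally continuous on `(H, τ₁)`, then on the pointwise stabilizer `H_(ℕ \ H·F)` the
topology `τ` is coarser than `τ₁`: every `τ`-open subset of this stabilizer is `τ₁`-open. -/
theorem stmt_13 (H : Subgroup (Equiv.Perm ℕ)) (F : Set ℕ) (hF : F.Finite)
    (t1 : TopologicalSpace ↥H) (ht1 : @IsTopologicalGroup ↥H t1 _)
    (hprox : ∀ k ∈ F, @RightProxCont ↥H _ t1 ℕ ⊥ (fun g => (g : Equiv.Perm ℕ) k)) :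
    ∀ U : Set ↥(pstab H {x | x ∉ orbitSet H F}),
      @IsOpen _ (TopologicalSpace.induced Subtype.val
        (TopologicalSpace.induced Subtype.val tauPerm)) U →
      @IsOpen _ (TopologicalSpace.induced Subtype.val t1) U := by
  intro U hU
  letI := t1
  haveI := ht1
  set S : Set ↥H := pstab H {x | x ∉ orbitSet H F} with hS
  have hcont : @Continuous ↥S (UniformFun ℕ ℕ) _
      (@UniformFun.uniformSpace ℕ ℕ samuelNat).toTopologicalSpace
      (fun s => UniformFun.ofFun ⇑(((s : ↥H) : Equiv.Perm ℕ))) := by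
    have hsam : (@UniformFun.uniformSpace ℕ ℕ samuelNat).toTopologicalSpace =
        ⨅ (n : ℕ) (c : ℕ → Fin n),
          (@UniformFun.uniformSpace ℕ ℕ (UniformSpace.comap c ⊥)).toTopologicalSpace := by
      unfold samuelNat
      rw [UniformFun.iInf_eq, UniformSpace.toTopologicalSpace_iInf]
      refine iInf_congr fun n => ?_
      rw [UniformFun.iInf_eq, UniformSpace.toTopologicalSpace_iInf]
    rw [hsam]
    refine continuous_iInf_rng.2 fun n => continuous_iInf_rng.2 fun c => ?_
    letI uS : UniformSpace ℕ := UniformSpace.comap c (⊥ : UniformSpace (Fin n))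
    rw [continuous_iff_continuousAt]
    intro g₀
    rw [ContinuousAt, (UniformFun.hasBasis_nhds ℕ ℕ _).tendsto_right_iff]
    intro V hV
    have hVc : {p : ℕ × ℕ | c p.1 = c p.2} ⊆ V := by
      rw [show (uniformity ℕ : Filter (ℕ × ℕ)) =
          Filter.comap (Prod.map c c) (@uniformity (Fin n) ⊥) from uniformity_comap c] at hV
      obtain ⟨W, hW, hsub⟩ := hV
      rw [bot_uniformity, Filter.mem_principal] at hW
      intro p hp
      exact hsub (hW (by exact hp : (c p.1, c p.2) ∈ SetRel.id))
    obtain ⟨U₀, hU₀, hkey⟩ := key_lemma H F hF t1 hprox c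
    have hN : (Subtype.val ⁻¹' {h : ↥H | h * (g₀ : ↥H)⁻¹ ∈ U₀} : Set ↥S) ∈ nhds g₀ := by
      rw [nhds_induced]
      refine Filter.preimage_mem_comap ?_
      have hc : Continuous fun h : ↥H => h * (g₀ : ↥H)⁻¹ := continuous_mul_right _
      have hca := hc.continuousAt (x := (g₀ : ↥H))
      rw [ContinuousAt] at hca
      have h1 : (g₀ : ↥H) * (g₀ : ↥H)⁻¹ = 1 := by group
      rw [h1] at hca
      exact hca hU₀
    filter_upwards [hN] with g hg
    intro x
    refine hVc ?_
    show c (((g₀ : ↥H) : Equiv.Perm ℕ) x) = c (((g : ↥H) : Equiv.Perm ℕ) x)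
    by_cases hx : x ∈ orbitSet H F
    · exact (hkey (g : ↥H) (g₀ : ↥H) hg x hx).symm
    · rw [g₀.2 x hx, g.2 x hx]
  rw [tauPerm, induced_compose, induced_compose] at hU
  obtain ⟨O, hO, rfl⟩ := (@isOpen_induced_iff _ _
    ((@UniformFun.uniformSpace ℕ ℕ samuelNat).toTopologicalSpace) _ _).1 hU
  exact (@continuous_def _ _ _ ((@UniformFun.uniformSpace ℕ ℕ samuelNat).toTopologicalSpace) _).1
    hcont O hO
end

section
/- Let H be a subgroup of G = Sym(ℕ), F ⊆ ℕ a finite set, and τ₁ a group topology on H. For k ∈ F let φ_k : H → ℕ be given by φ_k(g) = g(k), ℕ discrete. If for each k ∈ F the map φ_k is right uniformly continuous with respect to the right uniformity of (H, τ₁), then τ₁ is discrete on the pointwise stabilizer H_(ℕ∖H·F) (i.e., the subspace topology induced by τ₁ on H_(ℕ∖H·F) is the discrete topology). -/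
/-- Proposition 3.2(2): if `τ₁` is a group topology on a subgroup `H ≤ G = Sym(ℕ)` and, for
each `k` in the finite set `F`, the evaluation map `φ_k : g ↦ g k` (into discrete `ℕ`) is
right uniformly continuous on `(H, τ₁)`, then `τ₁` is discrete on the pointwise stabilizer
`H_(ℕ \ H·F)`. -/
theorem stmt_14 (H : Subgroup (Equiv.Perm ℕ)) (F : Set ℕ) (hF : F.Finite)
    (t1 : TopologicalSpace ↥H) (ht1 : @IsTopologicalGroup ↥H t1 _)
    (huc : ∀ k ∈ F, @RightUC ↥H _ t1 ℕ ⊥ (fun g => (g : Equiv.Perm ℕ) k)) :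
    TopologicalSpace.induced
      (Subtype.val : ↥(pstab H {x | x ∉ orbitSet H F}) → ↥H) t1 = ⊥ := by
  classical
  letI := t1
  haveI := ht1
  set L : Set ℕ := {x | x ∉ orbitSet H F} with hL
  have hid : (SetRel.id : Set (ℕ × ℕ)) ∈ @uniformity ℕ ⊥ := by
    rw [bot_uniformity]; exact Filter.mem_principal_self _
  choose U hU hprop using fun k hk => huc k hk SetRel.id hid
  set U' : ℕ → Set ↥H := fun k => if hk : k ∈ F then U k hk else Set.univ with hU'
  have hU'mem : ∀ k, U' k ∈ nhds (1 : ↥H) := by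
    intro k
    by_cases hk : k ∈ F
    · simp only [hU', dif_pos hk]; exact hU k hk
    · simp only [hU', dif_neg hk]; exact Filter.univ_mem
  have hWmem : (⋂ k ∈ F, U' k) ∈ nhds (1 : ↥H) :=
    (Filter.biInter_mem hF).2 fun k _ => hU'mem k
  set W := ⋂ k ∈ F, U' k with hW
  -- key : W ∩ pstab = {1}
  have key : ∀ s : ↥H, s ∈ W → s ∈ pstab H L → s = 1 := by
    intro s hsW hsL
    ext x
    show (s : Equiv.Perm ℕ) x = x
    by_cases hx : x ∈ orbitSet H F
    · obtain ⟨h, hh, k, hk, hhk⟩ := hx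
      have hsk : s ∈ U k hk := by
        have := Set.mem_iInter₂.1 hsW k hk
        simpa only [hU', dif_pos hk] using this
      have := hprop k hk (s * ⟨h, hh⟩) ⟨h, hh⟩ (by simpa using hsk)
      rw [SetRel.mem_id] at this
      simpa [hhk] using this
    · exact hsL x hx
  -- discrete
  refine eq_bot_of_singletons_open fun a => ?_
  obtain ⟨O, hOW, hOopen, hO1⟩ := mem_nhds_iff.1 hWmem
  refine ⟨(fun h : ↥H => h * (a : ↥H)⁻¹) ⁻¹' O,
    hOopen.preimage (continuous_mul_right _), ?_⟩
  ext b
  simp only [Set.mem_preimage, Set.mem_singleton_iff]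
  constructor
  · intro hb
    have hmem : (b : ↥H) * (a : ↥H)⁻¹ ∈ pstab H L := by
      intro x hx
      have hax : ((a : ↥H) : Equiv.Perm ℕ) x = x := a.2 x hx
      have hbx : ((b : ↥H) : Equiv.Perm ℕ) x = x := b.2 x hx
      have hainv : (((a : ↥H) : Equiv.Perm ℕ))⁻¹ x = x :=
        (Equiv.Perm.inv_eq_iff_eq).2 hax.symm
      simp only [Subgroup.coe_mul, Subgroup.coe_inv, Equiv.Perm.mul_apply]
      rw [hainv, hbx]
    have h1 := key _ (hOW hb) hmem
    exact Subtype.ext (mul_inv_eq_one.1 h1)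
  · rintro rfl
    simpa using hO1
end

section
/- Let H be a subgroup of G = Sym(ℕ), F ⊆ ℕ a finite set, and τ₁ a group topology on H which is finer than the restriction to H of the topology τ₀ of pointwise convergence on G (ℕ discrete). If (H, τ₁) is strongly FSIN, then τ₁ is discrete on the pointwise stabilizer H_(ℕ∖H·F) (i.e., the subspace topology induced by τ₁ on H_(ℕ∖H·F) is the discrete topology). -/
/-- The natural Polish topology `τ₀` on `Sym(ℕ)`: the topology of pointwise convergence,
`ℕ` being discrete. -/
def tauZero : TopologicalSpace (Equiv.Perm ℕ) :=
  TopologicalSpace.induced (fun g => (⇑g : ℕ → ℕ))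
    (@Pi.topologicalSpace ℕ (fun _ => ℕ) (fun _ => ⊥))

/-- A topological group is strongly FSIN if every (not necessarily bounded) left uniformly
continuous real-valued function on it is right uniformly continuous. -/
def StronglyFSIN {G : Type*} [Group G] (t : TopologicalSpace G) : Prop :=
  ∀ f : G → ℝ, LeftUC t f → RightUC t f

open Topology

private lemma nat_dist_lt_one {m n : ℕ} (h : dist (m : ℝ) (n : ℝ) < 1) : m = n := by
  rw [Real.dist_eq, abs_sub_lt_iff] at h
  have h1 : (m : ℝ) < n + 1 := by linarith [h.1]
  have h2 : (n : ℝ) < m + 1 := by linarith [h.2]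
  have h1' : m < n + 1 := by exact_mod_cast h1
  have h2' : n < m + 1 := by exact_mod_cast h2
  omega

/-- Proposition 3.2(3): if `τ₁` is a group topology on a subgroup `H ≤ G = Sym(ℕ)` finer than
the restriction of the pointwise convergence topology `τ₀`, and `(H, τ₁)` is strongly FSIN,
then `τ₁` is discrete on the pointwise stabilizer `H_(ℕ \ H·F)`, for any finite `F ⊆ ℕ`. -/
theorem stmt_15 (H : Subgroup (Equiv.Perm ℕ)) (F : Set ℕ) (hF : F.Finite)
    (t1 : TopologicalSpace ↥H) (ht1 : @IsTopologicalGroup ↥H t1 _)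
    (hfiner : t1 ≤ TopologicalSpace.induced Subtype.val tauZero)
    (hfsin : StronglyFSIN t1) :
    TopologicalSpace.induced
      (Subtype.val : ↥(pstab H {x | x ∉ orbitSet H F}) → ↥H) t1 = ⊥ := by
  letI := t1
  haveI := ht1
  haveI : Finite ↥F := hF.to_subtype
  obtain ⟨enc, henc⟩ := Countable.exists_injective_nat (↥F → ℕ)
  -- the left uniformly continuous function
  set f : ↥H → ℝ := fun h => (enc (fun x : ↥F => (h : Equiv.Perm ℕ) x) : ℝ) with hf
  -- the basic open set of elements fixing F pointwise
  have hVopen : IsOpen[t1] {h : ↥H | ∀ x ∈ F, (h : Equiv.Perm ℕ) x = x} := by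
    refine hfiner _ ?_
    letI t0 : TopologicalSpace (Equiv.Perm ℕ) := tauZero
    refine isOpen_induced_iff.mpr ⟨{g : Equiv.Perm ℕ | ∀ x ∈ F, g x = x}, ?_, rfl⟩
    show IsOpen[TopologicalSpace.induced (fun g : Equiv.Perm ℕ => (⇑g : ℕ → ℕ))
      Pi.topologicalSpace] _
    refine isOpen_induced_iff.mpr
      ⟨Set.pi F (fun x => {x}), isOpen_set_pi hF (fun _ _ => isOpen_discrete _), ?_⟩
    ext g; simp [Set.mem_pi]
  -- f is left uniformly continuous
  have hleft : LeftUC t1 f := by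
    intro V hV
    refine ⟨{h : ↥H | ∀ x ∈ F, (h : Equiv.Perm ℕ) x = x}, ?_, ?_⟩
    · exact IsOpen.mem_nhds hVopen (by simp)
    · intro g h hgh
      have : f g = f h := by
        have : (fun x : ↥F => (g : Equiv.Perm ℕ) x) = fun x : ↥F => (h : Equiv.Perm ℕ) x := by
          funext x
          have hx := hgh x.1 x.2
          have : ((g⁻¹ * h : ↥H) : Equiv.Perm ℕ) x = (x : ℕ) := hx
          have hcomp : (g : Equiv.Perm ℕ)⁻¹ ((h : Equiv.Perm ℕ) x) = (x : ℕ) := this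
          have := congrArg (g : Equiv.Perm ℕ) hcomp
          simpa using this.symm
        simp [hf, this]
      rw [this]
      exact refl_mem_uniformity hV
  -- apply strong FSIN
  have hright := hfsin f hleft
  obtain ⟨U, hU1, hU⟩ := hright {p : ℝ × ℝ | dist p.1 p.2 < 1} (Metric.dist_mem_uniformity one_pos)
  -- elements of U fix the orbit H·F pointwise
  have hUfix : ∀ u ∈ U, ∀ x ∈ orbitSet H F, (u : Equiv.Perm ℕ) x = x := by
    intro u hu x hx
    obtain ⟨h, hh, k, hk, rfl⟩ := hx
    set hh' : ↥H := ⟨h, hh⟩ with hhh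
    have hmem : (u * hh') * hh'⁻¹ ∈ U := by simpa using hu
    have hd := hU (u * hh') hh' hmem
    have : enc (fun x : ↥F => ((u * hh' : ↥H) : Equiv.Perm ℕ) x)
        = enc (fun x : ↥F => ((hh' : ↥H) : Equiv.Perm ℕ) x) := nat_dist_lt_one hd
    have := congrFun (henc this) ⟨k, hk⟩
    simpa using this
  -- find an open neighborhood inside U
  obtain ⟨O, hOU, hOopen, hO1⟩ := mem_nhds_iff.mp hU1
  -- every singleton in the stabilizer is open in the induced topology
  apply eq_bot_of_singletons_open
  intro p
  rw [isOpen_induced_iff]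
  refine ⟨(fun x => (p : ↥H) * x) '' O, (isOpenMap_mul_left (p : ↥H)) O hOopen, ?_⟩
  ext q
  simp only [Set.mem_preimage, Set.mem_image, Set.mem_singleton_iff]
  constructor
  · rintro ⟨o, hoO, ho⟩
    have hoval : o = (p : ↥H)⁻¹ * (q : ↥H) := by
      rw [← ho]; group
    have hofix1 : ∀ x ∈ orbitSet H F, (o : Equiv.Perm ℕ) x = x := hUfix o (hOU hoO)
    have hofix2 : ∀ x, x ∉ orbitSet H F → (o : Equiv.Perm ℕ) x = x := by
      intro x hx
      have hpx : ((p : ↥H) : Equiv.Perm ℕ) x = x := p.2 x hx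
      have hqx : ((q : ↥H) : Equiv.Perm ℕ) x = x := q.2 x hx
      have : (o : Equiv.Perm ℕ) = ((p : ↥H) : Equiv.Perm ℕ)⁻¹ * ((q : ↥H) : Equiv.Perm ℕ) := by
        rw [hoval]; rfl
      rw [this]
      simp only [Equiv.Perm.mul_apply, hqx]
      rw [Equiv.Perm.inv_eq_iff_eq, hpx]
    have : (o : Equiv.Perm ℕ) = 1 := by
      ext x
      by_cases hx : x ∈ orbitSet H F
      · simpa using hofix1 x hx
      · simpa using hofix2 x hx
    have ho1 : o = 1 := by
      ext; simp [this]
    have : (q : ↥H) = (p : ↥H) := by rw [← ho, ho1, mul_one]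
    exact Subtype.ext this
  · rintro rfl
    exact ⟨1, hO1, mul_one _⟩
end

section
/- Let H be a subgroup of G = Sym(ℕ), m ∈ ℕ, and L ⊆ ℕ a set such that |L ∩ K| ≤ m for every orbit K of the action of H on ℕ. Then the pointwise stabilizer H_(L) is open in H for the topology induced by τ. -/
/-- Lemma 3.3: if `H ≤ G = Sym(ℕ)` and `L ⊆ ℕ` meets every orbit of `H` in at most `m`
points, then the pointwise stabilizer `H_(L)` is `τ`-open in `H`. -/
theorem stmt_16 (H : Subgroup (Equiv.Perm ℕ)) (m : ℕ) (L : Set ℕ)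
    (hL : ∀ x : ℕ, Cardinal.mk ↥(L ∩ MulAction.orbit ↥H x) ≤ (m : Cardinal)) :
    @IsOpen ↥H (TopologicalSpace.induced Subtype.val tauPerm) (pstab H L) := by
  classical
  -- Finiteness and cardinality bounds on `L ∩ orbit x`.
  have hfin : ∀ x : ℕ, (L ∩ MulAction.orbit ↥H x).Finite := fun x =>
    Cardinal.lt_aleph0_iff_set_finite.mp ((hL x).trans_lt (Cardinal.nat_lt_aleph0 m))
  have hcard : ∀ x : ℕ, (L ∩ MulAction.orbit ↥H x).ncard ≤ m := by
    intro x
    have h1 := Cardinal.toNat_le_toNat (hL x) (Cardinal.nat_lt_aleph0 m)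
    rw [Cardinal.toNat_natCast] at h1
    rw [← Nat.card_coe_set_eq]
    exact h1
  -- The rank function on `L`.
  set n : ℕ → ℕ := fun a => {b | b ∈ L ∩ MulAction.orbit ↥H a ∧ b < a}.ncard with hn
  have hsubfin : ∀ a : ℕ, {b | b ∈ L ∩ MulAction.orbit ↥H a ∧ b < a}.Finite := fun a =>
    (hfin a).subset (fun b hb => hb.1)
  -- Strict monotonicity of the rank within an orbit.
  have hmono : ∀ x y : ℕ, x ∈ L → MulAction.orbit ↥H x = MulAction.orbit ↥H y →
      x < y → n x < n y := by
    intro x y hx horb hxy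
    have hins : insert x {b | b ∈ L ∩ MulAction.orbit ↥H x ∧ b < x}
        ⊆ {b | b ∈ L ∩ MulAction.orbit ↥H y ∧ b < y} := by
      intro b hb
      rcases hb with rfl | hb
      · exact ⟨⟨hx, horb ▸ MulAction.mem_orbit_self b⟩, hxy⟩
      · exact ⟨⟨hb.1.1, horb ▸ hb.1.2⟩, hb.2.trans hxy⟩
    have h1 : (insert x {b | b ∈ L ∩ MulAction.orbit ↥H x ∧ b < x}).ncard
        = n x + 1 := Set.ncard_insert_of_notMem (fun h => lt_irrefl x h.2) (hsubfin x)
    have h2 := Set.ncard_le_ncard hins (hsubfin y)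
    have h3 : n y = {b | b ∈ L ∩ MulAction.orbit ↥H y ∧ b < y}.ncard := rfl
    omega
  -- Rank is injective on `L ∩ orbit`.
  have hinj : ∀ a ∈ L, ∀ b ∈ L, b ∈ MulAction.orbit ↥H a → n b = n a → b = a := by
    intro a ha b hb hba hnba
    have horb : MulAction.orbit ↥H b = MulAction.orbit ↥H a := MulAction.orbit_eq_iff.mpr hba
    rcases lt_trichotomy b a with h | h | h
    · exact absurd hnba (Nat.ne_of_lt (hmono b a hb horb h))
    · exact h
    · exact absurd hnba (Nat.ne_of_gt (hmono a b ha horb.symm h))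
  -- The coloring.
  have hbound : ∀ a : ℕ, (if a ∈ L then n a + 1 else 0) < m + 1 := by
    intro a
    split
    · next ha =>
      have hssub : {b | b ∈ L ∩ MulAction.orbit ↥H a ∧ b < a} ⊂ L ∩ MulAction.orbit ↥H a := by
        constructor
        · intro b hb; exact hb.1
        · intro hsub
          exact absurd (hsub ⟨ha, MulAction.mem_orbit_self a⟩).2 (lt_irrefl a)
      have h1 := Set.ncard_lt_ncard hssub (hfin a)
      have h2 := hcard a
      have h3 : n a = {b | b ∈ L ∩ MulAction.orbit ↥H a ∧ b < a}.ncard := rfl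
      omega
    · omega
  set c : ℕ → Fin (m + 1) := fun a => ⟨if a ∈ L then n a + 1 else 0, hbound a⟩ with hc
  -- For `f ∈ H`, fixing `L` pointwise is equivalent to preserving the coloring.
  have hfix : ∀ f : Equiv.Perm ℕ, (∀ x ∈ L, f x = x) → ∀ x, c (f x) = c x := by
    intro f hf x
    by_cases hx : x ∈ L
    · rw [hf x hx]
    · have hfx : f x ∉ L := by
        intro hmem
        have h1 : f (f x) = f x := hf _ hmem
        exact hx (f.injective h1 ▸ hmem)
      simp only [hc, hx, hfx, if_false]
  have hcol : ∀ f : Equiv.Perm ℕ, f ∈ H → (∀ x, c (f x) = c x) → ∀ a ∈ L, f a = a := by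
    intro f hf hcf a ha
    have h1 := congrArg Fin.val (hcf a)
    simp only [hc, ha, if_true] at h1
    by_cases hfa : f a ∈ L
    · simp only [hfa, if_true] at h1
      have horbit : f a ∈ MulAction.orbit ↥H a := ⟨⟨f, hf⟩, rfl⟩
      exact hinj a ha (f a) hfa horbit (by omega)
    · simp only [hfa, if_false] at h1
      omega
  -- The entourage `{(x, y) | c x = c y}` belongs to the Samuel uniformity.
  have hVmem : {p : ℕ × ℕ | c p.1 = c p.2} ∈ @uniformity ℕ samuelNat := by
    rw [samuelNat, iInf_uniformity]
    refine Filter.mem_iInf_of_mem (m + 1) ?_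
    rw [iInf_uniformity]
    refine Filter.mem_iInf_of_mem c ?_
    rw [@uniformity_comap ℕ (Fin (m + 1)) ⊥ c, @bot_uniformity (Fin (m + 1))]
    have h1 : Prod.map c c ⁻¹' SetRel.id ∈
        Filter.comap (Prod.map c c) (Filter.principal SetRel.id) :=
      Filter.preimage_mem_comap (Filter.mem_principal_self _)
    have h2 : Prod.map c c ⁻¹' SetRel.id = {p : ℕ × ℕ | c p.1 = c p.2} := by
      ext p; simp [SetRel.id, Prod.map]
    rwa [h2] at h1
  -- The corresponding set of color-preserving functions is open for uniform convergence.
  have hWopen : @IsOpen (UniformFun ℕ ℕ)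
      (@UniformFun.uniformSpace ℕ ℕ samuelNat).toTopologicalSpace
      {F | ∀ x, c (UniformFun.toFun F x) = c x} := by
    letI : UniformSpace ℕ := samuelNat
    rw [isOpen_iff_mem_nhds]
    intro F hF
    rw [UniformSpace.mem_nhds_iff]
    refine ⟨UniformFun.gen ℕ ℕ {p : ℕ × ℕ | c p.1 = c p.2},
      (UniformFun.hasBasis_uniformity ℕ ℕ).mem_of_mem hVmem, ?_⟩
    intro G hG x
    have h1 : c (UniformFun.toFun F x) = c (UniformFun.toFun G x) := hG x
    exact h1.symm.trans (hF x)
  -- Assemble.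
  rw [@isOpen_induced_iff _ _ tauPerm]
  refine ⟨(fun g : Equiv.Perm ℕ => UniformFun.ofFun ⇑g) ⁻¹'
      {F | ∀ x, c (UniformFun.toFun F x) = c x}, ?_, ?_⟩
  · show @IsOpen _ (TopologicalSpace.induced (fun g : Equiv.Perm ℕ => UniformFun.ofFun ⇑g)
      (@UniformFun.uniformSpace ℕ ℕ samuelNat).toTopologicalSpace) _
    exact (@isOpen_induced_iff _ _
      ((@UniformFun.uniformSpace ℕ ℕ samuelNat).toTopologicalSpace) _ _).mpr ⟨_, hWopen, rfl⟩
  · ext g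
    simp only [Set.mem_preimage, Set.mem_setOf_eq]
    constructor
    · intro h a ha
      exact hcol (g : Equiv.Perm ℕ) g.2 (fun x => h x) a ha
    · intro h x
      exact hfix (g : Equiv.Perm ℕ) h x
end

section
/- Let H be a subgroup of G = Sym(ℕ) such that all but finitely many orbits of H on ℕ are finite and uniformly bounded (i.e., there exist m ∈ ℕ and finitely many orbits outside of which every orbit has at most m elements). Then the discrete topology is the only group topology on H that is both proximally fine (with respect to its right uniformity) and finer than the topology induced on H by τ. -/
universe v

/-! ### Auxiliary lemmas -/

theorem stmt17_colour_mem_tau {n : ℕ} (c : ℕ → Fin n) :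
    {g : Equiv.Perm ℕ | ∀ y, c (g y) = c y} ∈ @nhds _ tauPerm 1 := by
  have hW : {p : ℕ × ℕ | c p.1 = c p.2} ∈ @uniformity ℕ samuelNat := by
    have hle : samuelNat ≤ UniformSpace.comap c ⊥ :=
      iInf_le_of_le n (iInf_le _ c)
    have hmem : {p : ℕ × ℕ | c p.1 = c p.2} ∈ @uniformity ℕ (UniformSpace.comap c ⊥) := by
      rw [uniformity_comap]
      refine Filter.mem_comap.mpr ⟨SetRel.id, ?_, ?_⟩
      · rw [bot_uniformity]; exact Filter.mem_principal_self _
      · intro p hp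
        simpa [SetRel.id] using hp
    exact hle hmem
  letI uSam : UniformSpace ℕ := samuelNat
  have key : {φ : UniformFun ℕ ℕ | ∀ y, c (UniformFun.toFun φ y) = c y} ∈
      @nhds _ ((@UniformFun.uniformSpace ℕ ℕ samuelNat).toTopologicalSpace)
        (UniformFun.ofFun ⇑(1 : Equiv.Perm ℕ)) := by
    rw [UniformSpace.mem_nhds_iff]
    refine ⟨UniformFun.gen ℕ ℕ {p : ℕ × ℕ | c p.1 = c p.2}, ?_, ?_⟩
    · exact (UniformFun.hasBasis_uniformity ℕ ℕ).mem_of_mem hW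
    · intro φ hφ
      intro y
      have := hφ y
      simpa [UniformFun.gen] using this.symm
  rw [tauPerm, nhds_induced]
  exact Filter.mem_comap.mpr ⟨_, key, fun g hg => fun y => hg y⟩

theorem stmt17_colour_mem_H (H : Subgroup (Equiv.Perm ℕ)) (t1 : TopologicalSpace ↥H)
    (hfiner : t1 ≤ TopologicalSpace.induced Subtype.val tauPerm)
    {n : ℕ} (c : ℕ → Fin n) :
    {u : ↥H | ∀ y, c ((u : Equiv.Perm ℕ) y) = c y} ∈ @nhds ↥H t1 1 := by
  have h := stmt17_colour_mem_tau c
  have h2 : {u : ↥H | ∀ y, c ((u : Equiv.Perm ℕ) y) = c y} ∈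
      @nhds ↥H (TopologicalSpace.induced Subtype.val tauPerm) 1 := by
    letI : TopologicalSpace (Equiv.Perm ℕ) := tauPerm
    rw [nhds_induced]
    refine Filter.mem_comap.mpr
      ⟨{g : Equiv.Perm ℕ | ∀ y, c (g y) = c y}, ?_, fun u hu => hu⟩
    simpa using h
  exact nhds_mono hfiner h2

theorem stmt17_bucket (ψ : ℕ → ℝ) (C : ℝ) (hC : ∀ a, |ψ a| ≤ C) (ε : ℝ) (hε : 0 < ε) :
    ∃ (n : ℕ) (c : ℕ → Fin n), ∀ a b, c a = c b → dist (ψ a) (ψ b) < ε := by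
  have hC0 : 0 ≤ C := le_trans (abs_nonneg _) (hC 0)
  set δ := ε / 2 with hδdef
  have hδ0 : 0 < δ := by positivity
  have key : ∀ a, 0 ≤ (ψ a + C) / δ := by
    intro a
    have := (abs_le.mp (hC a)).1
    have : 0 ≤ ψ a + C := by linarith
    positivity
  have hbd : ∀ a, ⌊(ψ a + C) / δ⌋₊ < ⌈2 * C / δ⌉₊ + 1 := by
    intro a
    have h1 : (ψ a + C) / δ ≤ 2 * C / δ := by
      have := (abs_le.mp (hC a)).2
      rw [div_le_div_iff_of_pos_right hδ0]
      linarith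
    have h2 : ⌊(ψ a + C) / δ⌋₊ ≤ ⌊2 * C / δ⌋₊ := Nat.floor_le_floor h1
    have h3 : ⌊2 * C / δ⌋₊ ≤ ⌈2 * C / δ⌉₊ := Nat.floor_le_ceil _
    omega
  refine ⟨⌈2 * C / δ⌉₊ + 1, fun a => ⟨⌊(ψ a + C) / δ⌋₊, hbd a⟩, ?_⟩
  intro a b hab
  have h1 : ⌊(ψ a + C) / δ⌋₊ = ⌊(ψ b + C) / δ⌋₊ := by
    simpa [Fin.ext_iff] using hab
  have e1 : (⌊(ψ a + C) / δ⌋₊ : ℝ) ≤ (ψ a + C) / δ := Nat.floor_le (key a)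
  have e2 : (ψ a + C) / δ < ⌊(ψ a + C) / δ⌋₊ + 1 := Nat.lt_floor_add_one _
  have e3 : (⌊(ψ b + C) / δ⌋₊ : ℝ) ≤ (ψ b + C) / δ := Nat.floor_le (key b)
  have e4 : (ψ b + C) / δ < ⌊(ψ b + C) / δ⌋₊ + 1 := Nat.lt_floor_add_one _
  have hcast : (⌊(ψ a + C) / δ⌋₊ : ℝ) = (⌊(ψ b + C) / δ⌋₊ : ℝ) := by exact_mod_cast h1
  rw [Real.dist_eq, abs_sub_lt_iff]
  have hψa : ψ a = ((ψ a + C) / δ) * δ - C := by field_simp; ring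
  have hψb : ψ b = ((ψ b + C) / δ) * δ - C := by field_simp; ring
  constructor <;> nlinarith [e1, e2, e3, e4, hδ0, hcast]

theorem stmt17_fix_mem (H : Subgroup (Equiv.Perm ℕ)) (t1 : TopologicalSpace ↥H)
    (hfiner : t1 ≤ TopologicalSpace.induced Subtype.val tauPerm)
    (hpf : ProxFineGroup.{v} t1) (x : ℕ) :
    {u : ↥H | ∀ h : ↥H, (u : Equiv.Perm ℕ) ((h : Equiv.Perm ℕ) x) = (h : Equiv.Perm ℕ) x}
      ∈ @nhds ↥H t1 1 := by
  letI uY : UniformSpace (ULift.{v} ℕ) := ⊥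
  have hprox : RightProxCont t1 (fun g : ↥H => ULift.up.{v} ((g : Equiv.Perm ℕ) x)) := by
    intro φ hφ hbd
    obtain ⟨C, hC⟩ := hbd
    intro V hV
    obtain ⟨ε, hε, hball⟩ := Metric.mem_uniformity_dist.mp hV
    obtain ⟨n, c, hc⟩ := stmt17_bucket (fun a => φ (ULift.up a)) C (fun a => hC _) ε hε
    refine ⟨_, stmt17_colour_mem_H H t1 hfiner c, ?_⟩
    intro g h hgh
    apply hball
    apply hc
    have := hgh ((h : Equiv.Perm ℕ) x)
    simpa using this
  have hUC := hpf _ _ hprox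
  obtain ⟨U, hU, himp⟩ := hUC SetRel.id (by rw [bot_uniformity]; exact Filter.mem_principal_self _)
  refine Filter.mem_of_superset hU ?_
  intro u hu h
  have h2 := himp (u * h) h (by simpa using hu)
  have h3 : ULift.up.{v} (((u * h : ↥H) : Equiv.Perm ℕ) x)
      = ULift.up.{v} ((h : Equiv.Perm ℕ) x) := h2
  have h4 := congrArg ULift.down h3
  simpa using h4

theorem stmt17_rainbow (H : Subgroup (Equiv.Perm ℕ)) (m : ℕ) (F : Finset ℕ)
    (horb : ∀ x : ℕ, (∀ k ∈ F, x ∉ MulAction.orbit ↥H k) →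
      Cardinal.mk ↥(MulAction.orbit ↥H x) ≤ (m : Cardinal)) :
    ∃ c : ℕ → Fin (m + 1), ∀ u : ↥H, (∀ y, c ((u : Equiv.Perm ℕ) y) = c y) →
      ∀ y, (∀ k ∈ F, y ∉ MulAction.orbit ↥H k) → (u : Equiv.Perm ℕ) y = y := by
  classical
  have key : ∀ a : ℕ, (∀ k ∈ F, a ∉ MulAction.orbit ↥H k) →
      (MulAction.orbit ↥H a).Finite ∧ (MulAction.orbit ↥H a).ncard ≤ m := by
    intro a ha
    have h2 := horb a ha
    have h3 : Cardinal.mk ↥(MulAction.orbit ↥H a) < Cardinal.aleph0 :=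
      lt_of_le_of_lt h2 (Cardinal.nat_lt_aleph0 m)
    have hfin : Finite ↥(MulAction.orbit ↥H a) := Cardinal.lt_aleph0_iff_finite.mp h3
    refine ⟨Set.finite_coe_iff.mp hfin, ?_⟩
    have h4 : Nat.card ↥(MulAction.orbit ↥H a) ≤ m := by
      have h5 := Cardinal.toNat_le_toNat h2 (Cardinal.nat_lt_aleph0 m)
      simpa [Nat.card] using h5
    simpa [Nat.card_coe_set_eq] using h4
  refine ⟨fun a =>
    if ha : ∀ k ∈ F, a ∉ MulAction.orbit ↥H k then
      ⟨{z | z ∈ MulAction.orbit ↥H a ∧ z < a}.ncard, by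
        have hk := key a ha
        have hle : {z | z ∈ MulAction.orbit ↥H a ∧ z < a}.ncard
            ≤ (MulAction.orbit ↥H a).ncard :=
          Set.ncard_le_ncard (fun z hz => hz.1) hk.1
        omega⟩
    else ⟨m, Nat.lt_succ_self m⟩, ?_⟩
  intro u hu y hy
  have hfin := (key y hy).1
  have hmemO : (u : Equiv.Perm ℕ) y ∈ MulAction.orbit ↥H y :=
    MulAction.mem_orbit_iff.mpr ⟨u, rfl⟩
  have horbeq : MulAction.orbit ↥H ((u : Equiv.Perm ℕ) y) = MulAction.orbit ↥H y := by
    have h0 : (u : Equiv.Perm ℕ) y = u • y := rfl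
    rw [h0, MulAction.orbit_smul]
  have hysmall : ∀ k ∈ F, (u : Equiv.Perm ℕ) y ∉ MulAction.orbit ↥H k := by
    intro k hk hmem
    apply hy k hk
    obtain ⟨g, hg⟩ := MulAction.mem_orbit_iff.mp hmem
    refine MulAction.mem_orbit_iff.mpr ⟨u⁻¹ * g, ?_⟩
    have h0 : (u : Equiv.Perm ℕ) y = u • y := rfl
    rw [mul_smul, hg, h0, inv_smul_smul]
  have hco := hu y
  dsimp only at hco
  rw [dif_pos hysmall, dif_pos hy, Fin.mk.injEq, horbeq] at hco
  rcases lt_trichotomy ((u : Equiv.Perm ℕ) y) y with hlt | heq | hgt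
  · exfalso
    have hss : {z | z ∈ MulAction.orbit ↥H y ∧ z < (u : Equiv.Perm ℕ) y}
        ⊂ {z | z ∈ MulAction.orbit ↥H y ∧ z < y} := by
      constructor
      · intro z hz; exact ⟨hz.1, hz.2.trans hlt⟩
      · intro hsub2
        exact absurd (hsub2 ⟨hmemO, hlt⟩).2 (lt_irrefl _)
    have hlt2 := Set.ncard_lt_ncard hss (hfin.subset (fun z hz => hz.1))
    omega
  · exact heq
  · exfalso
    have hss : {z | z ∈ MulAction.orbit ↥H y ∧ z < y}
        ⊂ {z | z ∈ MulAction.orbit ↥H y ∧ z < (u : Equiv.Perm ℕ) y} := by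
      constructor
      · intro z hz; exact ⟨hz.1, hz.2.trans hgt⟩
      · intro hsub2
        exact absurd (hsub2 ⟨MulAction.mem_orbit_self y, hgt⟩).2 (lt_irrefl _)
    have hlt2 := Set.ncard_lt_ncard hss (hfin.subset (fun z hz => hz.1))
    omega

/-- Corollary 3.4: let `H ≤ G = Sym(ℕ)` be a subgroup all of whose orbits, apart from the
orbits of the points of a finite set `F`, have at most `m` elements.  Then the discrete
topology is the only group topology on `H` which is proximally fine and finer than the
topology induced by `τ`. -/
theorem stmt_17 (H : Subgroup (Equiv.Perm ℕ)) (m : ℕ) (F : Finset ℕ)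
    (horb : ∀ x : ℕ, (∀ k ∈ F, x ∉ MulAction.orbit ↥H k) →
      Cardinal.mk ↥(MulAction.orbit ↥H x) ≤ (m : Cardinal))
    (t1 : TopologicalSpace ↥H) (ht1 : @IsTopologicalGroup ↥H t1 _)
    (hfiner : t1 ≤ TopologicalSpace.induced Subtype.val tauPerm)
    (hpf : ProxFineGroup t1) :
    t1 = ⊥ := by
  classical
  obtain ⟨c₀, hc₀⟩ := stmt17_rainbow H m F horb
  have hS : ((⋂ k ∈ F, {u : ↥H | ∀ h : ↥H,
        (u : Equiv.Perm ℕ) ((h : Equiv.Perm ℕ) k) = (h : Equiv.Perm ℕ) k})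
      ∩ {u : ↥H | ∀ y, c₀ ((u : Equiv.Perm ℕ) y) = c₀ y}) ∈ @nhds ↥H t1 1 := by
    refine Filter.inter_mem ?_ (stmt17_colour_mem_H H t1 hfiner c₀)
    rw [Filter.biInter_finset_mem]
    exact fun k _ => stmt17_fix_mem H t1 hfiner hpf k
  have hsub : ((⋂ k ∈ F, {u : ↥H | ∀ h : ↥H,
        (u : Equiv.Perm ℕ) ((h : Equiv.Perm ℕ) k) = (h : Equiv.Perm ℕ) k})
      ∩ {u : ↥H | ∀ y, c₀ ((u : Equiv.Perm ℕ) y) = c₀ y}) ⊆ ({1} : Set ↥H) := by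
    rintro u ⟨hufix, hucol⟩
    have hall : ∀ y : ℕ, (u : Equiv.Perm ℕ) y = y := by
      intro y
      by_cases hy : ∀ k ∈ F, y ∉ MulAction.orbit ↥H k
      · exact hc₀ u hucol y hy
      · push_neg at hy
        obtain ⟨k, hkF, hky⟩ := hy
        obtain ⟨h', hh'⟩ := MulAction.mem_orbit_iff.mp hky
        have hfixk := Set.mem_iInter₂.mp hufix k hkF
        have h0 : (h' : Equiv.Perm ℕ) k = h' • k := rfl
        have := hfixk h'
        rw [h0, hh'] at this
        exact this
    have : (u : Equiv.Perm ℕ) = 1 := Equiv.ext fun y => by simpa using hall y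
    exact Set.mem_singleton_iff.mpr (Subtype.ext this)
  have h1mem : ({1} : Set ↥H) ∈ @nhds ↥H t1 1 := Filter.mem_of_superset hS hsub
  letI := t1
  haveI := ht1
  have hopen1 : IsOpen ({1} : Set ↥H) := by
    rcases mem_nhds_iff.mp h1mem with ⟨t, hts, hto, hmem⟩
    have ht : t = {1} := Set.eq_singleton_iff_unique_mem.mpr ⟨hmem, fun x hx => hts hx⟩
    rwa [ht] at hto
  have hall : ∀ s : Set ↥H, IsOpen s := by
    intro s
    have hs : s = ⋃ a ∈ s, {a} := by simp
    rw [hs]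
    refine isOpen_biUnion fun a _ => ?_
    have h2 : ({a} : Set ↥H) = (fun x : ↥H => x * a⁻¹) ⁻¹' {1} := by
      ext z; simp [mul_inv_eq_one]
    rw [h2]
    exact (continuous_mul_right a⁻¹).isOpen_preimage _ hopen1
  haveI : DiscreteTopology ↥H := discreteTopology_iff_forall_isOpen.mpr hall
  exact DiscreteTopology.eq_bot
end

section
/- Let H be a subgroup of G = Sym(ℕ) such that all but finitely many orbits of H on ℕ are finite and uniformly bounded (i.e., there exist m ∈ ℕ and finitely many orbits outside of which every orbit has at most m elements). If H with the topology induced by τ is strongly FSIN, then this topology on H is discrete. Moreover, if H has only finitely many orbits and H with the topology τ₀ of pointwise convergence is strongly FSIN, then H is a closed discrete subgroup of (G, τ₀). -/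
open Filter Set MulAction

namespace Stmt18Aux

abbrev Col := Σ n : ℕ, ℕ → Fin n

def colorSet (i : Col) : Set (ℕ × ℕ) := {p | i.2 p.1 = i.2 p.2}

instance : Nonempty Col := ⟨⟨1, fun _ => 0⟩⟩

lemma samuel_basis : (@uniformity ℕ samuelNat).HasBasis (fun _ : Col => True) colorSet := by
  have e1 : @uniformity ℕ samuelNat = ⨅ i : Col, Filter.principal (colorSet i) := by
    have e2 : @uniformity ℕ samuelNat
        = ⨅ n : ℕ, @uniformity ℕ (⨅ c : ℕ → Fin n, UniformSpace.comap c ⊥) :=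
      iInf_uniformity
    have e3 : ∀ n : ℕ, @uniformity ℕ (⨅ c : ℕ → Fin n, UniformSpace.comap c ⊥)
        = ⨅ c : ℕ → Fin n, Filter.principal (colorSet ⟨n, c⟩) := by
      intro n
      rw [iInf_uniformity]
      refine iInf_congr fun c => ?_
      rw [uniformity_comap, bot_uniformity, Filter.comap_principal]
      rfl
    rw [e2]
    simp_rw [e3]
    exact (iInf_sigma (f := fun i : Col => Filter.principal (colorSet i))).symm
  rw [e1]
  refine Filter.hasBasis_iInf_principal ?_
  intro i j
  refine ⟨⟨i.1 * j.1, fun x => finProdFinEquiv (i.2 x, j.2 x)⟩, ?_, ?_⟩ <;>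
  · intro p hp
    simp only [colorSet, mem_setOf_eq] at hp ⊢
    have := finProdFinEquiv.injective hp
    have h1 := congrArg Prod.fst this
    have h2 := congrArg Prod.snd this
    first
      | exact h1
      | exact h2

lemma tauPerm_nhds (h : Equiv.Perm ℕ) :
    (@nhds _ tauPerm h).HasBasis (fun _ : Col => True)
      (fun i => {g : Equiv.Perm ℕ | ∀ x, i.2 (h x) = i.2 (g x)}) := by
  have h1 : @nhds _ tauPerm h
      = Filter.comap (fun g : Equiv.Perm ℕ => UniformFun.ofFun (⇑g))
        (@nhds _ (@UniformFun.uniformSpace ℕ ℕ samuelNat).toTopologicalSpace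
          (UniformFun.ofFun (⇑h))) :=
    @nhds_induced (UniformFun ℕ ℕ) (Equiv.Perm ℕ)
      (@UniformFun.uniformSpace ℕ ℕ samuelNat).toTopologicalSpace
      (fun g : Equiv.Perm ℕ => UniformFun.ofFun (⇑g)) h
  rw [h1]
  have hb2 := @UniformFun.hasBasis_uniformity_of_basis ℕ ℕ samuelNat _ _ _ samuel_basis
  have hb3 := @nhds_basis_uniformity' (UniformFun ℕ ℕ) _ (@UniformFun.uniformSpace ℕ ℕ samuelNat)
    _ _ hb2 (UniformFun.ofFun (⇑h))
  refine (hb3.comap _).congr (fun i => Iff.rfl) (fun i _ => ?_)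
  rfl

variable (H : Subgroup (Equiv.Perm ℕ))

lemma nhdsH_basis (h : ↥H) :
    (@nhds _ (TopologicalSpace.induced (Subtype.val : ↥H → Equiv.Perm ℕ) tauPerm) h).HasBasis
      (fun _ : Col => True)
      (fun i => {g : ↥H | ∀ x, i.2 ((h : Equiv.Perm ℕ) x) = i.2 ((g : Equiv.Perm ℕ) x)}) := by
  have h1 : @nhds _ (TopologicalSpace.induced (Subtype.val : ↥H → Equiv.Perm ℕ) tauPerm) h
      = Filter.comap Subtype.val (@nhds _ tauPerm ↑h) :=
    @nhds_induced (Equiv.Perm ℕ) ↥H tauPerm Subtype.val h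
  rw [h1]
  exact ((tauPerm_nhds ↑h).comap _).congr (fun i => Iff.rfl) (fun i _ => rfl)



open scoped Classical

lemma nat_eq_of_dist_lt_one {a b : ℕ} (h : dist (a : ℝ) (b : ℝ) < 1) : a = b := by
  rw [Real.dist_eq, abs_lt] at h
  have h1 : a < b + 1 := by exact_mod_cast show (a:ℝ) < b + 1 by linarith
  have h2 : b < a + 1 := by exact_mod_cast show (b:ℝ) < a + 1 by linarith
  omega

/-- orbit representative: least element of the orbit -/
noncomputable def rp (x : ℕ) : ℕ := sInf {y | y ∈ MulAction.orbit (↥H) x}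

lemma rp_mem (x : ℕ) : rp H x ∈ MulAction.orbit (↥H) x :=
  Nat.sInf_mem ⟨x, MulAction.mem_orbit_self x⟩

lemma rp_congr {x y : ℕ} (h : y ∈ MulAction.orbit (↥H) x) : rp H y = rp H x := by
  unfold rp
  rw [MulAction.orbit_eq_iff.mpr h]

def AA : Set ℕ := {x | rp H x = x}

lemma rp_mem_AA (x : ℕ) : rp H x ∈ AA H := rp_congr H (rp_mem H x)

lemma mem_orbit_rp (x : ℕ) : x ∈ MulAction.orbit (↥H) (rp H x) := by
  rw [MulAction.orbit_eq_iff.mpr (rp_mem H x)]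
  exact MulAction.mem_orbit_self x

/-- a chosen element of `H` sending the representative of the orbit of `x` to `x`. -/
noncomputable def gg (x : ℕ) : ↥H :=
  Classical.choose (MulAction.mem_orbit_iff.mp (mem_orbit_rp H x))

lemma gg_spec (x : ℕ) : ((gg H x : Equiv.Perm ℕ)) (rp H x) = x :=
  Classical.choose_spec (MulAction.mem_orbit_iff.mp (mem_orbit_rp H x))

/-- the coset invariant: image of the transversal -/
def SS (g : ↥H) : Set ℕ := (g : Equiv.Perm ℕ) '' (AA H)

noncomputable def ff (g : ↥H) : ℝ :=
  if h : ∃ n : ℕ, SS H g = SS H (gg H n) then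
    ((sInf {n : ℕ | SS H g = SS H (gg H n)} : ℕ) : ℝ) + 1
  else 0

lemma ff_left_invariant {g h : ↥H}
    (hU : ∀ x, ((g⁻¹ * h : ↥H) : Equiv.Perm ℕ) x ∈ AA H ↔ x ∈ AA H) :
    SS H h = SS H g := by
  set u : ↥H := g⁻¹ * h with hu
  have huA : ((u : Equiv.Perm ℕ)) '' (AA H) = AA H := by
    ext y
    constructor
    · rintro ⟨x, hx, rfl⟩
      exact (hU x).mpr hx
    · intro hy
      refine ⟨(u : Equiv.Perm ℕ)⁻¹ y, ?_, Equiv.apply_symm_apply _ _⟩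
      have := hU ((u : Equiv.Perm ℕ)⁻¹ y)
      rw [Equiv.Perm.coe_inv, Equiv.apply_symm_apply] at this
      exact this.mp hy
  have hgh : (h : Equiv.Perm ℕ) = (g : Equiv.Perm ℕ) * (u : Equiv.Perm ℕ) := by
    rw [hu]
    push_cast
    group
  unfold SS
  rw [hgh]
  rw [Equiv.Perm.coe_mul, Set.image_comp, huA]

/-- Key lemma for part 1 -/
lemma key1 (hFSIN : StronglyFSIN
      (TopologicalSpace.induced (Subtype.val : ↥H → Equiv.Perm ℕ) tauPerm)) :
    ∃ i : Col, ∀ u : ↥H, (∀ x, i.2 (((u : Equiv.Perm ℕ)) x) = i.2 x) → u = 1 := by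
  set t := TopologicalSpace.induced (Subtype.val : ↥H → Equiv.Perm ℕ) tauPerm with ht
  -- the coloring by membership in AA H
  set c2 : ℕ → Fin 2 := fun x => if x ∈ AA H then 0 else 1 with hc2
  have hc2iff : ∀ x y : ℕ, c2 x = c2 y → (x ∈ AA H ↔ y ∈ AA H) := by
    intro x y hxy
    rw [hc2] at hxy
    by_cases hx : x ∈ AA H <;> by_cases hy : y ∈ AA H <;> simp [hx, hy] at hxy ⊢
  -- ff is left uniformly continuous
  have hLUC : LeftUC t (ff H) := by
    intro V hV
    refine ⟨{g : ↥H | ∀ x, c2 (((1 : ↥H) : Equiv.Perm ℕ) x) = c2 (((g : ↥H) : Equiv.Perm ℕ) x)},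
      (nhdsH_basis H 1).mem_of_mem (i := ⟨2, c2⟩) trivial, ?_⟩
    intro g h hgh
    simp only [Set.mem_setOf_eq, OneMemClass.coe_one, Equiv.Perm.one_apply] at hgh
    have hS : SS H h = SS H g := by
      refine ff_left_invariant H ?_
      intro x
      exact hc2iff _ _ (hgh x).symm
    have : ff H h = ff H g := by unfold ff; rw [hS]
    rw [this]
    exact refl_mem_uniformity hV
  obtain ⟨U', hU', hprop⟩ := hFSIN (ff H) hLUC {p | dist p.1 p.2 < 1}
    (Metric.dist_mem_uniformity one_pos)
  obtain ⟨i, -, hsub⟩ := ((nhdsH_basis H 1).mem_iff).mp hU'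
  refine ⟨i, ?_⟩
  intro u hu
  by_contra hne
  have hx0 : ∃ x₀ : ℕ, ((u : Equiv.Perm ℕ)) x₀ ≠ x₀ := by
    by_contra hall
    push_neg at hall
    exact hne (Subtype.ext (Equiv.ext hall))
  obtain ⟨x₀, hx₀⟩ := hx0
  set g : ↥H := gg H x₀ with hg
  have hP : ∃ n : ℕ, SS H g = SS H (gg H n) := ⟨x₀, rfl⟩
  set n₀ := sInf {n : ℕ | SS H g = SS H (gg H n)} with hn₀def
  have hn₀ : SS H g = SS H (gg H n₀) := Nat.sInf_mem (⟨x₀, rfl⟩ : {n : ℕ | SS H g = SS H (gg H n)}.Nonempty)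
  have hfg : ff H g = (n₀ : ℝ) + 1 := by unfold ff; rw [dif_pos hP]
  have humem : u ∈ U' := by
    apply hsub
    simp only [Set.mem_setOf_eq, OneMemClass.coe_one, Equiv.Perm.one_apply]
    intro x
    exact (hu x).symm
  have hpair := hprop (u * g) g (by rw [mul_inv_cancel_right]; exact humem)
  simp only [Set.mem_setOf_eq] at hpair
  rw [hfg] at hpair
  -- the other value
  by_cases hP' : ∃ n : ℕ, SS H (u * g) = SS H (gg H n)
  · set n₁ := sInf {n : ℕ | SS H (u * g) = SS H (gg H n)} with hn₁def
    have hn₁ : SS H (u * g) = SS H (gg H n₁) := Nat.sInf_mem hP'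
    have hfug : ff H (u * g) = (n₁ : ℝ) + 1 := by unfold ff; rw [dif_pos hP']
    rw [hfug] at hpair
    have hd : dist ((n₁ : ℝ)) ((n₀ : ℝ)) < 1 := by
      rw [Real.dist_eq] at hpair ⊢
      have : (n₁ : ℝ) + 1 - ((n₀ : ℝ) + 1) = (n₁ : ℝ) - (n₀ : ℝ) := by ring
      rwa [this] at hpair
    have hnn : n₁ = n₀ := nat_eq_of_dist_lt_one hd
    -- hence u preserves SS H g
    have hSu : ((u : Equiv.Perm ℕ)) '' (SS H g) = SS H g := by
      have h1 : SS H (u * g) = ((u : Equiv.Perm ℕ)) '' (SS H g) := by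
        unfold SS
        push_cast
        exact Set.image_comp _ _ _
      rw [← h1, hn₁, hnn, ← hn₀]
    -- x₀ ∈ SS H g
    have hx0mem : x₀ ∈ SS H g := ⟨rp H x₀, rp_mem_AA H x₀, gg_spec H x₀⟩
    have hux0mem : ((u : Equiv.Perm ℕ)) x₀ ∈ SS H g := by
      rw [← hSu]
      exact Set.mem_image_of_mem _ hx0mem
    obtain ⟨a, haA, hax⟩ := hux0mem
    -- a is in the orbit of x₀
    have haorb : a ∈ MulAction.orbit (↥H) x₀ := by
      have : a = ((g⁻¹ * u : ↥H)) • x₀ := by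
        show a = ((g⁻¹ * u : ↥H) : Equiv.Perm ℕ) x₀
        push_cast
        simp only [Function.comp_apply]
        rw [← hax, Equiv.Perm.coe_inv, Equiv.symm_apply_apply]
      rw [this]
      exact MulAction.mem_orbit _ _
    have ha : a = rp H x₀ := by
      have h1 : rp H a = rp H x₀ := rp_congr H haorb
      have h2 : rp H a = a := haA
      rw [← h1, h2]
    rw [ha, gg_spec H x₀] at hax
    exact hx₀ hax.symm
  · have hfug : ff H (u * g) = 0 := by unfold ff; rw [dif_neg hP']
    rw [hfug] at hpair
    rw [Real.dist_eq, abs_lt] at hpair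
    have : (0:ℝ) ≤ (n₀ : ℝ) := Nat.cast_nonneg n₀
    linarith [hpair.1]

/-- Part 1: discreteness -/
lemma part1 (hFSIN : StronglyFSIN
      (TopologicalSpace.induced (Subtype.val : ↥H → Equiv.Perm ℕ) tauPerm)) :
    TopologicalSpace.induced (Subtype.val : ↥H → Equiv.Perm ℕ) tauPerm = ⊥ := by
  obtain ⟨i, hkill⟩ := key1 H hFSIN
  refine eq_bot_of_singletons_open fun h => ?_
  rw [@isOpen_iff_mem_nhds _ (TopologicalSpace.induced (Subtype.val : ↥H → Equiv.Perm ℕ) tauPerm)]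
  rintro g rfl
  refine Filter.mem_of_superset ((nhdsH_basis H g).mem_of_mem (i := i) trivial) ?_
  intro g' hg'
  simp only [Set.mem_setOf_eq] at hg'
  have hukill : (g' * g⁻¹ : ↥H) = 1 := by
    apply hkill
    intro y
    have := hg' (((g : Equiv.Perm ℕ))⁻¹ y)
    rw [Equiv.Perm.coe_inv, Equiv.apply_symm_apply] at this
    push_cast
    simp only [Function.comp_apply]
    exact this.symm
  have : g' = g := by
    rwa [mul_inv_eq_one] at hukill
  simp [this]



-- ### Part 2 : tauZero

lemma nhds_bot_nat (y : ℕ) : @nhds ℕ ⊥ y = pure y := by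
  letI : TopologicalSpace ℕ := ⊥
  haveI : DiscreteTopology ℕ := ⟨rfl⟩
  exact congrFun (nhds_discrete ℕ) y

lemma tau0_nhds_mem_perm (h : Equiv.Perm ℕ) (T : Finset ℕ) :
    {g : Equiv.Perm ℕ | ∀ x ∈ T, g x = h x} ∈ @nhds _ tauZero h := by
  have h1 : @nhds _ tauZero h
      = Filter.comap (fun g : Equiv.Perm ℕ => (⇑g : ℕ → ℕ))
        (@nhds _ (@Pi.topologicalSpace ℕ (fun _ => ℕ) (fun _ => ⊥)) ⇑h) :=
    @nhds_induced (ℕ → ℕ) (Equiv.Perm ℕ) (@Pi.topologicalSpace ℕ (fun _ => ℕ) (fun _ => ⊥))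
      (fun g : Equiv.Perm ℕ => (⇑g : ℕ → ℕ)) h
  rw [h1]
  have h2 : @nhds (ℕ → ℕ) (@Pi.topologicalSpace ℕ (fun _ => ℕ) (fun _ => ⊥)) ⇑h
      = Filter.pi (fun i : ℕ => @nhds ℕ ⊥ (h i)) :=
    @nhds_pi ℕ (fun _ => ℕ) (fun _ => ⊥) ⇑h
  have h3 : {f : ℕ → ℕ | ∀ x ∈ T, f x = h x}
      ∈ @nhds (ℕ → ℕ) (@Pi.topologicalSpace ℕ (fun _ => ℕ) (fun _ => ⊥)) ⇑h := by
    rw [h2]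
    rw [Filter.mem_pi]
    refine ⟨↑T, T.finite_toSet, fun i => {h i}, ?_, ?_⟩
    · intro i
      rw [nhds_bot_nat]
      rfl
    · intro f hf x hx
      exact hf x hx
  exact Filter.preimage_mem_comap h3

variable (H : Subgroup (Equiv.Perm ℕ))

lemma tau0_nhds_mem_H (h : ↥H) (T : Finset ℕ) :
    {g : ↥H | ∀ x ∈ T, (g : Equiv.Perm ℕ) x = (h : Equiv.Perm ℕ) x}
      ∈ @nhds _ (TopologicalSpace.induced (Subtype.val : ↥H → Equiv.Perm ℕ) tauZero) h := by
  have h1 : @nhds _ (TopologicalSpace.induced (Subtype.val : ↥H → Equiv.Perm ℕ) tauZero) h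
      = Filter.comap Subtype.val (@nhds _ tauZero ↑h) :=
    @nhds_induced (Equiv.Perm ℕ) ↥H tauZero Subtype.val h
  rw [h1]
  exact Filter.preimage_mem_comap (tau0_nhds_mem_perm ↑h T)

lemma tau0_extract {U : Set ↥H}
    (hU : U ∈ @nhds _ (TopologicalSpace.induced (Subtype.val : ↥H → Equiv.Perm ℕ) tauZero) 1) :
    ∃ T : Finset ℕ, {u : ↥H | ∀ x ∈ T, (u : Equiv.Perm ℕ) x = x} ⊆ U := by
  have h1 : @nhds _ (TopologicalSpace.induced (Subtype.val : ↥H → Equiv.Perm ℕ) tauZero) 1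
      = Filter.comap Subtype.val (@nhds _ tauZero ((1 : ↥H) : Equiv.Perm ℕ)) :=
    @nhds_induced (Equiv.Perm ℕ) ↥H tauZero Subtype.val 1
  rw [h1] at hU
  obtain ⟨W, hW, hWsub⟩ := Filter.mem_comap.mp hU
  have h2 : @nhds _ tauZero ((1 : ↥H) : Equiv.Perm ℕ)
      = Filter.comap (fun g : Equiv.Perm ℕ => (⇑g : ℕ → ℕ))
        (@nhds _ (@Pi.topologicalSpace ℕ (fun _ => ℕ) (fun _ => ⊥))
          (⇑((1 : ↥H) : Equiv.Perm ℕ))) :=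
    @nhds_induced (ℕ → ℕ) (Equiv.Perm ℕ) (@Pi.topologicalSpace ℕ (fun _ => ℕ) (fun _ => ⊥))
      (fun g : Equiv.Perm ℕ => (⇑g : ℕ → ℕ)) _
  rw [h2] at hW
  obtain ⟨W', hW', hW'sub⟩ := Filter.mem_comap.mp hW
  rw [@nhds_pi ℕ (fun _ => ℕ) (fun _ => ⊥), Filter.mem_pi] at hW'
  obtain ⟨I, hIfin, tt, htt, httsub⟩ := hW'
  refine ⟨hIfin.toFinset, ?_⟩
  intro u hu
  apply hWsub
  apply hW'sub
  apply httsub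
  intro i hi
  have h4 : (u : Equiv.Perm ℕ) i = i := hu i (hIfin.mem_toFinset.mpr hi)
  have h5 := htt i
  rw [nhds_bot_nat] at h5
  have h6 : ((1 : ↥H) : Equiv.Perm ℕ) i ∈ tt i := h5
  simpa [h4] using h6

/-- chosen element of H mapping k to n (when n is in the orbit of k) -/
noncomputable def dd (k n : ℕ) : ↥H :=
  if h : n ∈ MulAction.orbit (↥H) k then Classical.choose (MulAction.mem_orbit_iff.mp h) else 1

lemma dd_spec (k n : ℕ) (h : n ∈ MulAction.orbit (↥H) k) :
    ((dd H k n : ↥H) : Equiv.Perm ℕ) k = n := by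
  unfold dd
  rw [dif_pos h]
  exact Classical.choose_spec (MulAction.mem_orbit_iff.mp h)

lemma coe_apply_mem_orbit (g : ↥H) (k : ℕ) :
    (g : Equiv.Perm ℕ) k ∈ MulAction.orbit (↥H) k :=
  MulAction.mem_orbit k g

noncomputable def fk (k : ℕ) (g : ↥H) : ℝ :=
  ((sInf {n : ℕ | (g : Equiv.Perm ℕ) k = ((dd H k n : ↥H) : Equiv.Perm ℕ) k} : ℕ) : ℝ)

lemma fk_nonempty (k : ℕ) (g : ↥H) :
    {n : ℕ | (g : Equiv.Perm ℕ) k = ((dd H k n : ↥H) : Equiv.Perm ℕ) k}.Nonempty :=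
  ⟨(g : Equiv.Perm ℕ) k, (dd_spec H k _ (coe_apply_mem_orbit H g k)).symm⟩

lemma key2k (hFSIN : StronglyFSIN
      (TopologicalSpace.induced (Subtype.val : ↥H → Equiv.Perm ℕ) tauZero)) (k : ℕ) :
    ∃ T : Finset ℕ, ∀ u : ↥H, (∀ x ∈ T, (u : Equiv.Perm ℕ) x = x) →
      ∀ x ∈ MulAction.orbit (↥H) k, (u : Equiv.Perm ℕ) x = x := by
  have hLUC : LeftUC (TopologicalSpace.induced (Subtype.val : ↥H → Equiv.Perm ℕ) tauZero)
      (fk H k) := by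
    intro V hV
    refine ⟨{g : ↥H | ∀ x ∈ ({k} : Finset ℕ),
        (g : Equiv.Perm ℕ) x = ((1 : ↥H) : Equiv.Perm ℕ) x},
      tau0_nhds_mem_H H 1 {k}, ?_⟩
    intro g h hgh
    have hk : ((g⁻¹ * h : ↥H) : Equiv.Perm ℕ) k = k := by
      have := hgh k (Finset.mem_singleton_self k)
      simpa using this
    have hk2 : (h : Equiv.Perm ℕ) k = (g : Equiv.Perm ℕ) k := by
      have h1 : ((g : Equiv.Perm ℕ)⁻¹) ((h : Equiv.Perm ℕ) k) = k := by
        have : ((g⁻¹ * h : ↥H) : Equiv.Perm ℕ) = (g : Equiv.Perm ℕ)⁻¹ * (h : Equiv.Perm ℕ) := by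
          push_cast; rfl
        rw [this] at hk
        simpa [Equiv.Perm.mul_apply] using hk
      have := congrArg (g : Equiv.Perm ℕ) h1
      rwa [Equiv.Perm.coe_inv, Equiv.apply_symm_apply] at this
    have : fk H k h = fk H k g := by unfold fk; rw [hk2]
    rw [this]
    exact refl_mem_uniformity hV
  obtain ⟨U', hU', hprop⟩ := hFSIN (fk H k) hLUC {p | dist p.1 p.2 < 1}
    (Metric.dist_mem_uniformity one_pos)
  obtain ⟨T, hT⟩ := tau0_extract H hU'
  refine ⟨T, ?_⟩
  intro u hu x hx
  set g : ↥H := dd H k x with hgdef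
  have hgk : (g : Equiv.Perm ℕ) k = x := dd_spec H k x hx
  have humem : u ∈ U' := hT hu
  have hpair := hprop (u * g) g (by rw [mul_inv_cancel_right]; exact humem)
  simp only [Set.mem_setOf_eq] at hpair
  set n₀ := sInf {n : ℕ | (g : Equiv.Perm ℕ) k = ((dd H k n : ↥H) : Equiv.Perm ℕ) k} with hn₀def
  have hn₀ : (g : Equiv.Perm ℕ) k = ((dd H k n₀ : ↥H) : Equiv.Perm ℕ) k :=
    Nat.sInf_mem (fk_nonempty H k g)
  set n₁ := sInf {n : ℕ | ((u * g : ↥H) : Equiv.Perm ℕ) k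
      = ((dd H k n : ↥H) : Equiv.Perm ℕ) k} with hn₁def
  have hn₁ : ((u * g : ↥H) : Equiv.Perm ℕ) k = ((dd H k n₁ : ↥H) : Equiv.Perm ℕ) k :=
    Nat.sInf_mem (fk_nonempty H k (u * g))
  have hnn : n₁ = n₀ := nat_eq_of_dist_lt_one hpair
  have hug : ((u * g : ↥H) : Equiv.Perm ℕ) k = (u : Equiv.Perm ℕ) x := by
    push_cast
    simp only [Function.comp_apply, Equiv.Perm.mul_apply]
    rw [hgk]
  rw [hug, hnn, ← hn₀, hgk] at hn₁
  exact hn₁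

lemma key2 (hFSIN : StronglyFSIN
      (TopologicalSpace.induced (Subtype.val : ↥H → Equiv.Perm ℕ) tauZero))
    (horbs : ∃ F' : Finset ℕ, ∀ x : ℕ, ∃ k ∈ F', x ∈ MulAction.orbit (↥H) k) :
    ∃ T : Finset ℕ, ∀ u : ↥H, (∀ x ∈ T, (u : Equiv.Perm ℕ) x = x) → u = 1 := by
  obtain ⟨F', hF'⟩ := horbs
  choose Tsel hTsel using key2k H hFSIN
  refine ⟨F'.biUnion Tsel, ?_⟩
  intro u hu
  have hfix : ∀ x : ℕ, (u : Equiv.Perm ℕ) x = x := by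
    intro x
    obtain ⟨k, hk, hx⟩ := hF' x
    refine hTsel k u ?_ x hx
    intro y hy
    exact hu y (Finset.mem_biUnion.mpr ⟨k, hk, hy⟩)
  exact Subtype.ext (Equiv.ext hfix)

lemma part2closed
    (hkill : ∃ T : Finset ℕ, ∀ u : ↥H, (∀ x ∈ T, (u : Equiv.Perm ℕ) x = x) → u = 1) :
    @IsClosed (Equiv.Perm ℕ) tauZero (H : Set (Equiv.Perm ℕ)) := by
  obtain ⟨T, hkill⟩ := hkill
  refine @isClosed_of_closure_subset _ tauZero _ ?_
  intro g hg
  have hg' := (@mem_closure_iff_nhds _ tauZero g (H : Set (Equiv.Perm ℕ))).mp hg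
  have happrox : ∀ Sf : Finset ℕ, ∃ h : Equiv.Perm ℕ, h ∈ H ∧ ∀ x ∈ Sf, h x = g x := by
    intro Sf
    obtain ⟨h, hh1, hh2⟩ := hg' _ (tau0_nhds_mem_perm g Sf)
    exact ⟨h, hh2, hh1⟩
  choose hh hmem hagree using happrox
  have hagree_all : ∀ x : ℕ, hh T x = g x := by
    intro x
    have hu1 : ((⟨hh T, hmem T⟩ : ↥H)⁻¹ * ⟨hh (insert x T), hmem (insert x T)⟩) = 1 := by
      apply hkill
      intro y hy
      show ((hh T)⁻¹ * hh (insert x T)) y = y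
      rw [Equiv.Perm.mul_apply, hagree (insert x T) y (Finset.mem_insert_of_mem hy),
        ← hagree T y hy, Equiv.Perm.coe_inv, Equiv.symm_apply_apply]
    have h3 : hh T = hh (insert x T) := congrArg Subtype.val (inv_mul_eq_one.mp hu1)
    rw [h3]
    exact hagree (insert x T) x (Finset.mem_insert_self x T)
  have hgh : hh T = g := Equiv.coe_fn_injective (funext hagree_all)
  rw [← hgh]
  exact hmem T

lemma part2discrete
    (hkill : ∃ T : Finset ℕ, ∀ u : ↥H, (∀ x ∈ T, (u : Equiv.Perm ℕ) x = x) → u = 1) :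
    TopologicalSpace.induced (Subtype.val : ↥H → Equiv.Perm ℕ) tauZero = ⊥ := by
  obtain ⟨T, hkill⟩ := hkill
  refine eq_bot_of_singletons_open fun h => ?_
  rw [@isOpen_iff_mem_nhds _ (TopologicalSpace.induced (Subtype.val : ↥H → Equiv.Perm ℕ) tauZero)]
  rintro g rfl
  refine Filter.mem_of_superset (tau0_nhds_mem_H H g T) ?_
  intro g' hg'
  simp only [Set.mem_setOf_eq] at hg'
  have hu1 : (g⁻¹ * g' : ↥H) = 1 := by
    apply hkill
    intro y hy
    show ((g : Equiv.Perm ℕ)⁻¹ * (g' : Equiv.Perm ℕ)) y = y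
    rw [Equiv.Perm.mul_apply, hg' y hy, Equiv.Perm.coe_inv, Equiv.symm_apply_apply]
  have : g = g' := inv_mul_eq_one.mp hu1
  simp [this]

end Stmt18Aux

/-- Corollary 3.5: let `H ≤ G = Sym(ℕ)` be a subgroup all of whose orbits, apart from the
orbits of the points of a finite set `F`, have at most `m` elements.  (1) If `H` with the
topology induced by `τ` is strongly FSIN, then this topology is discrete.  (2) Moreover, if
`H` has only finitely many orbits and `H` with the topology induced by the pointwise
convergence topology `τ₀` is strongly FSIN, then `H` is a closed discrete subgroup of
`(G, τ₀)`. -/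
theorem stmt_18 (H : Subgroup (Equiv.Perm ℕ)) (m : ℕ) (F : Finset ℕ)
    (horb : ∀ x : ℕ, (∀ k ∈ F, x ∉ MulAction.orbit ↥H k) →
      Cardinal.mk ↥(MulAction.orbit ↥H x) ≤ (m : Cardinal)) :
    (StronglyFSIN (TopologicalSpace.induced (Subtype.val : ↥H → Equiv.Perm ℕ) tauPerm) →
      TopologicalSpace.induced (Subtype.val : ↥H → Equiv.Perm ℕ) tauPerm = ⊥) ∧
    ((∃ F' : Finset ℕ, ∀ x : ℕ, ∃ k ∈ F', x ∈ MulAction.orbit ↥H k) →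
      StronglyFSIN (TopologicalSpace.induced (Subtype.val : ↥H → Equiv.Perm ℕ) tauZero) →
      @IsClosed (Equiv.Perm ℕ) tauZero (H : Set (Equiv.Perm ℕ)) ∧
        TopologicalSpace.induced (Subtype.val : ↥H → Equiv.Perm ℕ) tauZero = ⊥) := by
  constructor
  · exact Stmt18Aux.part1 H
  · intro horbs hFSIN0
    exact ⟨Stmt18Aux.part2closed H (Stmt18Aux.key2 H hFSIN0 horbs),
      Stmt18Aux.part2discrete H (Stmt18Aux.key2 H hFSIN0 horbs)⟩
end
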